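/- arXiv:2401.04179 — 8 statements merged into one kernel-verified Lean document; each statement's English description precedes it below -/
import Mathlib

section
/- Let U₁ ≤ U₂ and V₁ ≤ V₂ be real numbers such that the closed rectangle [U₁,U₂] × [V₁,V₂] is contained in U, and let Ψ be a smooth fixed-mode solution of the Regge–Wheeler equation on U. Define E_u := ∫_{V₁}^{V₂} [ (∂ᵥΨ)² + V·Ψ² ](u, v̄) dv̄ for u ∈ [U₁,U₂] and Ē_v := ∫_{U₁}^{U₂} [ (∂ᵤΨ)² + V·Ψ² ](ū, v) dū for v ∈ [V₁,V₂]. Then E_{U₁} + Ē_{V₁} = E_{U₂} + Ē_{V₂}. (This is the fixed-angular-mode form of the T-energy conservation law for the Regge–Wheeler equation, Lemma 6.2.) -/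
open scoped ContDiff

noncomputable section

/-- Partial derivative with respect to the first (`u`) null coordinate. -/
def pdu (f : ℝ × ℝ → ℝ) : ℝ × ℝ → ℝ := fun p => deriv (fun x => f (x, p.2)) p.1

/-- Partial derivative with respect to the second (`v`) null coordinate. -/
def pdv (f : ℝ × ℝ → ℝ) : ℝ × ℝ → ℝ := fun p => deriv (fun y => f (p.1, y)) p.2

/-- `D = 1 - 2M/r`. -/
def Dfun (M : ℝ) (r : ℝ × ℝ → ℝ) : ℝ × ℝ → ℝ := fun p => 1 - 2 * M / r p

/-- The fixed-mode Regge–Wheeler potential `V = (D/r²)·(ℓ(ℓ+1) − 6M/r)`. -/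
def Vpot (M : ℝ) (r : ℝ × ℝ → ℝ) (ℓ : ℕ) : ℝ × ℝ → ℝ := fun p =>
  Dfun M r p / (r p) ^ 2 * (((ℓ * (ℓ + 1) : ℕ) : ℝ) - 6 * M / r p)

lemma hasDerivAt_fst (f : ℝ × ℝ → ℝ) (p : ℝ × ℝ) (hf : DifferentiableAt ℝ f p) :
    HasDerivAt (fun x => f (x, p.2)) (fderiv ℝ f p (1, 0)) p.1 := by
  have h1 : HasDerivAt (fun x : ℝ => (x, p.2)) ((1:ℝ), (0:ℝ)) p.1 :=
    (hasDerivAt_id p.1).prodMk (hasDerivAt_const _ _)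
  exact hf.hasFDerivAt.comp_hasDerivAt _ h1

lemma hasDerivAt_snd (f : ℝ × ℝ → ℝ) (p : ℝ × ℝ) (hf : DifferentiableAt ℝ f p) :
    HasDerivAt (fun y => f (p.1, y)) (fderiv ℝ f p (0, 1)) p.2 := by
  have h1 : HasDerivAt (fun y : ℝ => (p.1, y)) ((0:ℝ), (1:ℝ)) p.2 :=
    (hasDerivAt_const _ _).prodMk (hasDerivAt_id p.2)
  exact hf.hasFDerivAt.comp_hasDerivAt _ h1

lemma pdu_eq_fderiv {f : ℝ × ℝ → ℝ} {p : ℝ × ℝ} (hf : DifferentiableAt ℝ f p) :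
    pdu f p = fderiv ℝ f p (1, 0) := (hasDerivAt_fst f p hf).deriv

lemma pdv_eq_fderiv {f : ℝ × ℝ → ℝ} {p : ℝ × ℝ} (hf : DifferentiableAt ℝ f p) :
    pdv f p = fderiv ℝ f p (0, 1) := (hasDerivAt_snd f p hf).deriv

lemma contDiffOn_fderiv_apply {f : ℝ × ℝ → ℝ} {U : Set (ℝ × ℝ)} (hU : IsOpen U)
    (hf : ContDiffOn ℝ ∞ f U) (c : ℝ × ℝ) :
    ContDiffOn ℝ ∞ (fun p => fderiv ℝ f p c) U := by
  have h := hf.fderiv_of_isOpen hU (m := ∞) le_rfl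
  exact h.clm_apply contDiffOn_const

lemma diffAt_of_contDiffOn {f : ℝ × ℝ → ℝ} {U : Set (ℝ × ℝ)} (hU : IsOpen U)
    (hf : ContDiffOn ℝ ∞ f U) {p : ℝ × ℝ} (hp : p ∈ U) : DifferentiableAt ℝ f p :=
  (hf.contDiffAt (hU.mem_nhds hp)).differentiableAt (by simp)

lemma diffAt_clm {f : ℝ × ℝ → ℝ} {U : Set (ℝ × ℝ)} (hU : IsOpen U)
    (hf : ContDiffOn ℝ ∞ f U) {p : ℝ × ℝ} (hp : p ∈ U) :
    DifferentiableAt ℝ (fderiv ℝ f) p :=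
  ((hf.fderiv_of_isOpen hU (m := ∞) le_rfl).contDiffAt (hU.mem_nhds hp)).differentiableAt
    (by simp)

lemma fderiv_apply_const {f : ℝ × ℝ → ℝ} {U : Set (ℝ × ℝ)} (hU : IsOpen U)
    (hf : ContDiffOn ℝ ∞ f U) {p : ℝ × ℝ} (hp : p ∈ U) (c w : ℝ × ℝ) :
    fderiv ℝ (fun q => fderiv ℝ f q c) p w = fderiv ℝ (fderiv ℝ f) p w c := by
  have h2 : HasFDerivAt (fun q => fderiv ℝ f q c)
      ((ContinuousLinearMap.apply ℝ ℝ c).comp (fderiv ℝ (fderiv ℝ f) p)) p :=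
    (ContinuousLinearMap.apply ℝ ℝ c).hasFDerivAt.comp p (diffAt_clm hU hf hp).hasFDerivAt
  rw [h2.fderiv]; rfl

lemma pdu_pdv_eq {f : ℝ × ℝ → ℝ} {U : Set (ℝ × ℝ)} (hU : IsOpen U)
    (hf : ContDiffOn ℝ ∞ f U) {p : ℝ × ℝ} (hp : p ∈ U) :
    pdu (pdv f) p = fderiv ℝ (fderiv ℝ f) p (1, 0) (0, 1) := by
  have hmem : ∀ᶠ x in nhds p.1, (x, p.2) ∈ U :=
    (continuous_id.prodMk continuous_const).continuousAt.preimage_mem_nhds (hU.mem_nhds hp)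
  have hev : (fun x => pdv f (x, p.2)) =ᶠ[nhds p.1] (fun x => fderiv ℝ f (x, p.2) (0, 1)) :=
    hmem.mono fun x hx => pdv_eq_fderiv (diffAt_of_contDiffOn hU hf hx)
  have h1 : pdu (pdv f) p = pdu (fun q => fderiv ℝ f q (0, 1)) p := hev.deriv_eq
  rw [h1, pdu_eq_fderiv (diffAt_of_contDiffOn hU (contDiffOn_fderiv_apply hU hf _) hp),
    fderiv_apply_const hU hf hp]

lemma pdv_pdu_eq {f : ℝ × ℝ → ℝ} {U : Set (ℝ × ℝ)} (hU : IsOpen U)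
    (hf : ContDiffOn ℝ ∞ f U) {p : ℝ × ℝ} (hp : p ∈ U) :
    pdv (pdu f) p = fderiv ℝ (fderiv ℝ f) p (0, 1) (1, 0) := by
  have hmem : ∀ᶠ y in nhds p.2, (p.1, y) ∈ U :=
    (continuous_const.prodMk continuous_id).continuousAt.preimage_mem_nhds (hU.mem_nhds hp)
  have hev : (fun y => pdu f (p.1, y)) =ᶠ[nhds p.2] (fun y => fderiv ℝ f (p.1, y) (1, 0)) :=
    hmem.mono fun y hy => pdu_eq_fderiv (diffAt_of_contDiffOn hU hf hy)
  have h1 : pdv (pdu f) p = pdv (fun q => fderiv ℝ f q (1, 0)) p := hev.deriv_eq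
  rw [h1, pdv_eq_fderiv (diffAt_of_contDiffOn hU (contDiffOn_fderiv_apply hU hf _) hp),
    fderiv_apply_const hU hf hp]

lemma pdv_pdu_comm {f : ℝ × ℝ → ℝ} {U : Set (ℝ × ℝ)} (hU : IsOpen U)
    (hf : ContDiffOn ℝ ∞ f U) {p : ℝ × ℝ} (hp : p ∈ U) :
    pdv (pdu f) p = pdu (pdv f) p := by
  rw [pdu_pdv_eq hU hf hp, pdv_pdu_eq hU hf hp]
  have hev : ∀ᶠ y in nhds p, HasFDerivAt f (fderiv ℝ f y) y :=
    Filter.eventually_of_mem (hU.mem_nhds hp) fun y hy =>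
      (diffAt_of_contDiffOn hU hf hy).hasFDerivAt
  exact second_derivative_symmetric_of_eventually hev (diffAt_clm hU hf hp).hasFDerivAt _ _

def hpot (M L : ℝ) : ℝ → ℝ := fun s => (1 - 2 * M / s) / s ^ 2 * (L - 6 * M / s)

def hpot' (M L : ℝ) : ℝ → ℝ := fun s =>
  (2 * M / s ^ 2 * s ^ 2 - (1 - 2 * M / s) * (2 * s)) / (s ^ 2) ^ 2 * (L - 6 * M / s)
    + (1 - 2 * M / s) / s ^ 2 * (6 * M / s ^ 2)

lemma hasDerivAt_hpot (M L : ℝ) {s : ℝ} (hs : s ≠ 0) :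
    HasDerivAt (hpot M L) (hpot' M L s) s := by
  have hs2 : s ^ 2 ≠ 0 := pow_ne_zero _ hs
  have ha : HasDerivAt (fun s : ℝ => 1 - 2 * M / s) (2 * M / s ^ 2) s := by
    have := ((hasDerivAt_const s (2 * M)).div (hasDerivAt_id s) hs).const_sub 1
    refine this.congr_deriv ?_
    simp only [id]
    field_simp
    ring
  have hb : HasDerivAt (fun s : ℝ => (1 - 2 * M / s) / s ^ 2)
      ((2 * M / s ^ 2 * s ^ 2 - (1 - 2 * M / s) * (2 * s)) / (s ^ 2) ^ 2) s := by
    have := ha.div (hasDerivAt_pow 2 s) hs2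
    refine this.congr_deriv ?_
    ring_nf
  have hc : HasDerivAt (fun s : ℝ => L - 6 * M / s) (6 * M / s ^ 2) s := by
    have := ((hasDerivAt_const s (6 * M)).div (hasDerivAt_id s) hs).const_sub L
    refine this.congr_deriv ?_
    simp only [id]
    field_simp
    ring
  exact hb.mul hc

lemma continuousOn_hpot_comp {M L : ℝ} {r : ℝ × ℝ → ℝ} {U : Set (ℝ × ℝ)}
    (hrc : ContinuousOn r U) (hne : ∀ p ∈ U, r p ≠ 0) :
    ContinuousOn (fun p => hpot M L (r p)) U := by
  unfold hpot
  fun_prop (disch := (intro p hp; first | exact hne _ hp | exact pow_ne_zero _ (hne _ hp)))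

lemma continuousOn_hpot'_comp {M L : ℝ} {r : ℝ × ℝ → ℝ} {U : Set (ℝ × ℝ)}
    (hrc : ContinuousOn r U) (hne : ∀ p ∈ U, r p ≠ 0) :
    ContinuousOn (fun p => hpot' M L (r p)) U := by
  unfold hpot'
  fun_prop (disch := (intro p hp; first | exact hne _ hp | exact pow_ne_zero _ (hne _ hp) | exact pow_ne_zero _ (pow_ne_zero _ (hne _ hp))))

def Wflux (M L : ℝ) (r Ψ : ℝ × ℝ → ℝ) : ℝ × ℝ → ℝ := fun p =>
  hpot' M L (r p) * (-(1 - 2 * M / r p)) * (Ψ p) ^ 2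
    + hpot M L (r p) * (2 * Ψ p * fderiv ℝ Ψ p (1, 0))
    + 2 * fderiv ℝ Ψ p (0, 1) * (-(hpot M L (r p) * Ψ p))

lemma flux_hasDerivAt_u {M L : ℝ} {r Ψ : ℝ × ℝ → ℝ} {U : Set (ℝ × ℝ)} (hU : IsOpen U)
    (hr : ContDiffOn ℝ ∞ r U) (hΨ : ContDiffOn ℝ ∞ Ψ U) (hne : ∀ p ∈ U, r p ≠ 0)
    (hrud : ∀ p ∈ U, fderiv ℝ r p (1, 0) = -(1 - 2 * M / r p))
    (hmix : ∀ p ∈ U, fderiv ℝ (fderiv ℝ Ψ) p (1, 0) (0, 1) = -(hpot M L (r p) * Ψ p))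
    {p : ℝ × ℝ} (hp : p ∈ U) :
    HasDerivAt (fun x => (fderiv ℝ Ψ (x, p.2) (0, 1)) ^ 2
        + hpot M L (r (x, p.2)) * (Ψ (x, p.2)) ^ 2)
      (Wflux M L r Ψ p) p.1 := by
  have hPv : HasDerivAt (fun x => fderiv ℝ Ψ (x, p.2) (0, 1))
      (-(hpot M L (r p) * Ψ p)) p.1 := by
    have h := hasDerivAt_fst (fun q => fderiv ℝ Ψ q (0, 1)) p
      (diffAt_of_contDiffOn hU (contDiffOn_fderiv_apply hU hΨ _) hp)
    rwa [fderiv_apply_const hU hΨ hp, hmix p hp] at h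
  have hrl : HasDerivAt (fun x => r (x, p.2)) (-(1 - 2 * M / r p)) p.1 := by
    have h := hasDerivAt_fst r p (diffAt_of_contDiffOn hU hr hp)
    rwa [hrud p hp] at h
  have hV : HasDerivAt (fun x => hpot M L (r (x, p.2)))
      (hpot' M L (r p) * (-(1 - 2 * M / r p))) p.1 :=
    (hasDerivAt_hpot M L (hne p hp)).comp (h₂ := hpot M L) p.1 hrl
  have hΨl : HasDerivAt (fun x => Ψ (x, p.2)) (fderiv ℝ Ψ p (1, 0)) p.1 :=
    hasDerivAt_fst Ψ p (diffAt_of_contDiffOn hU hΨ hp)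
  have := (hPv.pow 2).add (hV.mul (hΨl.pow 2))
  refine this.congr_deriv ?_
  unfold Wflux
  simp only [Pi.pow_apply, Prod.mk.eta]
  ring

lemma flux_hasDerivAt_v {M L : ℝ} {r Ψ : ℝ × ℝ → ℝ} {U : Set (ℝ × ℝ)} (hU : IsOpen U)
    (hr : ContDiffOn ℝ ∞ r U) (hΨ : ContDiffOn ℝ ∞ Ψ U) (hne : ∀ p ∈ U, r p ≠ 0)
    (hrvd : ∀ p ∈ U, fderiv ℝ r p (0, 1) = 1 - 2 * M / r p)
    (hmix : ∀ p ∈ U, fderiv ℝ (fderiv ℝ Ψ) p (1, 0) (0, 1) = -(hpot M L (r p) * Ψ p))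
    {p : ℝ × ℝ} (hp : p ∈ U) :
    HasDerivAt (fun y => (fderiv ℝ Ψ (p.1, y) (1, 0)) ^ 2
        + hpot M L (r (p.1, y)) * (Ψ (p.1, y)) ^ 2)
      (-(Wflux M L r Ψ p)) p.2 := by
  have hsymm : fderiv ℝ (fderiv ℝ Ψ) p (0, 1) (1, 0) = -(hpot M L (r p) * Ψ p) := by
    rw [← hmix p hp]
    have hev : ∀ᶠ y in nhds p, HasFDerivAt Ψ (fderiv ℝ Ψ y) y :=
      Filter.eventually_of_mem (hU.mem_nhds hp) fun y hy =>
        (diffAt_of_contDiffOn hU hΨ hy).hasFDerivAt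
    exact second_derivative_symmetric_of_eventually hev (diffAt_clm hU hΨ hp).hasFDerivAt _ _
  have hPu : HasDerivAt (fun y => fderiv ℝ Ψ (p.1, y) (1, 0))
      (-(hpot M L (r p) * Ψ p)) p.2 := by
    have h := hasDerivAt_snd (fun q => fderiv ℝ Ψ q (1, 0)) p
      (diffAt_of_contDiffOn hU (contDiffOn_fderiv_apply hU hΨ _) hp)
    rwa [fderiv_apply_const hU hΨ hp, hsymm] at h
  have hrl : HasDerivAt (fun y => r (p.1, y)) (1 - 2 * M / r p) p.2 := by
    have h := hasDerivAt_snd r p (diffAt_of_contDiffOn hU hr hp)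
    rwa [hrvd p hp] at h
  have hV : HasDerivAt (fun y => hpot M L (r (p.1, y)))
      (hpot' M L (r p) * (1 - 2 * M / r p)) p.2 :=
    (hasDerivAt_hpot M L (hne p hp)).comp (h₂ := hpot M L) p.2 hrl
  have hΨl : HasDerivAt (fun y => Ψ (p.1, y)) (fderiv ℝ Ψ p (0, 1)) p.2 :=
    hasDerivAt_snd Ψ p (diffAt_of_contDiffOn hU hΨ hp)
  have := (hPu.pow 2).add (hV.mul (hΨl.pow 2))
  refine this.congr_deriv ?_
  unfold Wflux
  simp only [Pi.pow_apply, Prod.mk.eta]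
  ring

lemma continuousOn_Wflux {M L : ℝ} {r Ψ : ℝ × ℝ → ℝ} {U : Set (ℝ × ℝ)} (hU : IsOpen U)
    (hr : ContDiffOn ℝ ∞ r U) (hΨ : ContDiffOn ℝ ∞ Ψ U) (hne : ∀ p ∈ U, r p ≠ 0) :
    ContinuousOn (Wflux M L r Ψ) U := by
  have h1 := continuousOn_hpot'_comp (M := M) (L := L) hr.continuousOn hne
  have h2 := continuousOn_hpot_comp (M := M) (L := L) hr.continuousOn hne
  have h3 := hΨ.continuousOn
  have h4 := (contDiffOn_fderiv_apply hU hΨ ((1 : ℝ), (0 : ℝ))).continuousOn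
  have h5 := (contDiffOn_fderiv_apply hU hΨ ((0 : ℝ), (1 : ℝ))).continuousOn
  have h6 := hr.continuousOn
  unfold Wflux
  fun_prop (disch := (intro p hp; exact hne _ hp))



open MeasureTheory in
/-- `T`-energy conservation for the fixed-angular-mode Regge–Wheeler equation
(Lemma 6.2, fixed-angular-mode form). -/
theorem regge_wheeler_energy_conservation
    (M : ℝ) (hM : 0 ≤ M)
    (U : Set (ℝ × ℝ)) (hUopen : IsOpen U)
    (r : ℝ × ℝ → ℝ) (hr : ContDiffOn ℝ ∞ r U)
    (hr2M : ∀ p ∈ U, 2 * M < r p)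
    (hru : ∀ p ∈ U, pdu r p = -(1 - 2 * M / r p))
    (hrv : ∀ p ∈ U, pdv r p = 1 - 2 * M / r p)
    (ℓ : ℕ) (hℓ : 2 ≤ ℓ)
    (U₁ U₂ V₁ V₂ : ℝ) (hU12 : U₁ ≤ U₂) (hV12 : V₁ ≤ V₂)
    (hrect : Set.Icc U₁ U₂ ×ˢ Set.Icc V₁ V₂ ⊆ U)
    (Ψ : ℝ × ℝ → ℝ) (hΨ : ContDiffOn ℝ ∞ Ψ U)
    (hRW : ∀ p ∈ U,
      pdu (pdv Ψ) p + Dfun M r p / (r p) ^ 2 * ((ℓ * (ℓ + 1) : ℕ) : ℝ) * Ψ p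
        - 6 * M * Dfun M r p / (r p) ^ 3 * Ψ p = 0) :
    (∫ v in V₁..V₂, ((pdv Ψ (U₁, v)) ^ 2 + Vpot M r ℓ (U₁, v) * (Ψ (U₁, v)) ^ 2)) +
        (∫ u in U₁..U₂, ((pdu Ψ (u, V₁)) ^ 2 + Vpot M r ℓ (u, V₁) * (Ψ (u, V₁)) ^ 2)) =
      (∫ v in V₁..V₂, ((pdv Ψ (U₂, v)) ^ 2 + Vpot M r ℓ (U₂, v) * (Ψ (U₂, v)) ^ 2)) +
        (∫ u in U₁..U₂, ((pdu Ψ (u, V₂)) ^ 2 + Vpot M r ℓ (u, V₂) * (Ψ (u, V₂)) ^ 2)) := by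

  have hne : ∀ p ∈ U, r p ≠ 0 := fun p hp =>
    ne_of_gt (lt_of_le_of_lt (by positivity) (hr2M p hp))
  set L : ℝ := ((ℓ * (ℓ + 1) : ℕ) : ℝ) with hLdef
  have hrud : ∀ p ∈ U, fderiv ℝ r p (1, 0) = -(1 - 2 * M / r p) := fun p hp => by
    rw [← pdu_eq_fderiv (diffAt_of_contDiffOn hUopen hr hp)]; exact hru p hp
  have hrvd : ∀ p ∈ U, fderiv ℝ r p (0, 1) = 1 - 2 * M / r p := fun p hp => by
    rw [← pdv_eq_fderiv (diffAt_of_contDiffOn hUopen hr hp)]; exact hrv p hp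
  have hmix : ∀ p ∈ U, fderiv ℝ (fderiv ℝ Ψ) p (1, 0) (0, 1)
      = -(hpot M L (r p) * Ψ p) := by
    intro p hp
    have h0 := hRW p hp
    rw [pdu_pdv_eq hUopen hΨ hp] at h0
    simp only [Dfun] at h0
    unfold hpot
    linear_combination h0
  set F' : ℝ × ℝ → ℝ := fun q => (fderiv ℝ Ψ q (0, 1)) ^ 2 + hpot M L (r q) * (Ψ q) ^ 2
    with hF'def
  set G' : ℝ × ℝ → ℝ := fun q => (fderiv ℝ Ψ q (1, 0)) ^ 2 + hpot M L (r q) * (Ψ q) ^ 2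
    with hG'def
  set Pw : ℝ × ℝ → ℝ := Wflux M L r Ψ with hPwdef
  have hU1 : U₁ ∈ Set.Icc U₁ U₂ := ⟨le_rfl, hU12⟩
  have hU2 : U₂ ∈ Set.Icc U₁ U₂ := ⟨hU12, le_rfl⟩
  have hV1 : V₁ ∈ Set.Icc V₁ V₂ := ⟨le_rfl, hV12⟩
  have hV2 : V₂ ∈ Set.Icc V₁ V₂ := ⟨hV12, le_rfl⟩
  -- congruence of integrands
  have hcong1 : ∀ a ∈ Set.Icc U₁ U₂,
      (∫ v in V₁..V₂, ((pdv Ψ (a, v)) ^ 2 + Vpot M r ℓ (a, v) * (Ψ (a, v)) ^ 2))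
        = ∫ v in V₁..V₂, F' (a, v) := by
    intro a ha
    apply intervalIntegral.integral_congr
    intro v hv
    rw [Set.uIcc_of_le hV12] at hv
    have hpU : ((a, v) : ℝ × ℝ) ∈ U := hrect ⟨ha, hv⟩
    rw [hF'def]
    simp only [Vpot, Dfun, hpot]
    rw [pdv_eq_fderiv (diffAt_of_contDiffOn hUopen hΨ hpU)]
  have hcong2 : ∀ b ∈ Set.Icc V₁ V₂,
      (∫ u in U₁..U₂, ((pdu Ψ (u, b)) ^ 2 + Vpot M r ℓ (u, b) * (Ψ (u, b)) ^ 2))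
        = ∫ u in U₁..U₂, G' (u, b) := by
    intro b hb
    apply intervalIntegral.integral_congr
    intro u hu
    rw [Set.uIcc_of_le hU12] at hu
    have hpU : ((u, b) : ℝ × ℝ) ∈ U := hrect ⟨hu, hb⟩
    rw [hG'def]
    simp only [Vpot, Dfun, hpot]
    rw [pdu_eq_fderiv (diffAt_of_contDiffOn hUopen hΨ hpU)]
  -- continuity
  have hWc : ContinuousOn Pw U := continuousOn_Wflux hUopen hr hΨ hne
  have hF'c : ContinuousOn F' U := by
    have h2 := continuousOn_hpot_comp (M := M) (L := L) hr.continuousOn hne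
    have h3 := hΨ.continuousOn
    have h5 := (contDiffOn_fderiv_apply hUopen hΨ ((0 : ℝ), (1 : ℝ))).continuousOn
    rw [hF'def]; fun_prop
  have hG'c : ContinuousOn G' U := by
    have h2 := continuousOn_hpot_comp (M := M) (L := L) hr.continuousOn hne
    have h3 := hΨ.continuousOn
    have h4 := (contDiffOn_fderiv_apply hUopen hΨ ((1 : ℝ), (0 : ℝ))).continuousOn
    rw [hG'def]; fun_prop
  have hlineu : ∀ v : ℝ, Continuous (fun u : ℝ => ((u, v) : ℝ × ℝ)) := fun v =>
    continuous_id.prodMk continuous_const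
  have hlinev : ∀ u : ℝ, Continuous (fun v : ℝ => ((u, v) : ℝ × ℝ)) := fun u =>
    continuous_const.prodMk continuous_id
  have intWu : ∀ v ∈ Set.Icc V₁ V₂,
      IntervalIntegrable (fun u => Pw (u, v)) volume U₁ U₂ := by
    intro v hv
    apply ContinuousOn.intervalIntegrable
    apply hWc.comp (hlineu v).continuousOn
    intro u hu; rw [Set.uIcc_of_le hU12] at hu; exact hrect ⟨hu, hv⟩
  have intWv : ∀ u ∈ Set.Icc U₁ U₂,
      IntervalIntegrable (fun v => Pw (u, v)) volume V₁ V₂ := by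
    intro u hu
    apply ContinuousOn.intervalIntegrable
    apply hWc.comp (hlinev u).continuousOn
    intro v hv; rw [Set.uIcc_of_le hV12] at hv; exact hrect ⟨hu, hv⟩
  have intFa : ∀ a ∈ Set.Icc U₁ U₂,
      IntervalIntegrable (fun v => F' (a, v)) volume V₁ V₂ := by
    intro a ha
    apply ContinuousOn.intervalIntegrable
    apply hF'c.comp (hlinev a).continuousOn
    intro v hv; rw [Set.uIcc_of_le hV12] at hv; exact hrect ⟨ha, hv⟩
  have intGb : ∀ b ∈ Set.Icc V₁ V₂,
      IntervalIntegrable (fun u => G' (u, b)) volume U₁ U₂ := by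
    intro b hb
    apply ContinuousOn.intervalIntegrable
    apply hG'c.comp (hlineu b).continuousOn
    intro u hu; rw [Set.uIcc_of_le hU12] at hu; exact hrect ⟨hu, hb⟩
  -- FTC steps
  have step1 : ∀ v ∈ Set.Icc V₁ V₂,
      (∫ u in U₁..U₂, Pw (u, v)) = F' (U₂, v) - F' (U₁, v) := by
    intro v hv
    apply intervalIntegral.integral_eq_sub_of_hasDerivAt
    · intro u hu; rw [Set.uIcc_of_le hU12] at hu
      exact flux_hasDerivAt_u hUopen hr hΨ hne hrud hmix (p := (u, v)) (hrect ⟨hu, hv⟩)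
    · exact intWu v hv
  have step2 : ∀ u ∈ Set.Icc U₁ U₂,
      (∫ v in V₁..V₂, Pw (u, v)) = G' (u, V₁) - G' (u, V₂) := by
    intro u hu
    have h : (∫ v in V₁..V₂, -(Pw (u, v))) = G' (u, V₂) - G' (u, V₁) := by
      apply intervalIntegral.integral_eq_sub_of_hasDerivAt
      · intro v hv; rw [Set.uIcc_of_le hV12] at hv
        exact flux_hasDerivAt_v hUopen hr hΨ hne hrvd hmix (p := (u, v)) (hrect ⟨hu, hv⟩)
      · exact (intWv u hu).neg
    rw [intervalIntegral.integral_neg] at h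
    linarith
  have stepA : (∫ v in V₁..V₂, F' (U₂, v)) - (∫ v in V₁..V₂, F' (U₁, v))
      = ∫ v in V₁..V₂, ∫ u in U₁..U₂, Pw (u, v) := by
    rw [← intervalIntegral.integral_sub (intFa U₂ hU2) (intFa U₁ hU1)]
    apply intervalIntegral.integral_congr
    intro v hv; rw [Set.uIcc_of_le hV12] at hv
    exact (step1 v hv).symm
  have stepB : (∫ u in U₁..U₂, G' (u, V₁)) - (∫ u in U₁..U₂, G' (u, V₂))
      = ∫ u in U₁..U₂, ∫ v in V₁..V₂, Pw (u, v) := by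
    rw [← intervalIntegral.integral_sub (intGb V₁ hV1) (intGb V₂ hV2)]
    apply intervalIntegral.integral_congr
    intro u hu; rw [Set.uIcc_of_le hU12] at hu
    exact (step2 u hu).symm
  -- Fubini
  have hIntOn : IntegrableOn Pw ((Set.Ioc U₁ U₂) ×ˢ (Set.Ioc V₁ V₂)) volume := by
    apply IntegrableOn.mono_set _
      (Set.prod_mono Set.Ioc_subset_Icc_self Set.Ioc_subset_Icc_self)
    exact ((hWc.mono hrect).integrableOn_compact (isCompact_Icc.prod isCompact_Icc))
  have hswap : (∫ v in V₁..V₂, ∫ u in U₁..U₂, Pw (u, v))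
      = ∫ u in U₁..U₂, ∫ v in V₁..V₂, Pw (u, v) := by
    rw [intervalIntegral.integral_of_le hV12, intervalIntegral.integral_of_le hU12]
    simp_rw [intervalIntegral.integral_of_le hU12, intervalIntegral.integral_of_le hV12]
    refine (MeasureTheory.integral_integral_swap ?_).symm
    rw [Measure.prod_restrict, ← Measure.volume_eq_prod]
    exact hIntOn
  rw [hcong1 U₁ hU1, hcong1 U₂ hU2, hcong2 V₁ hV1, hcong2 V₂ hV2]
  linarith [stepA, stepB, hswap]
end
end

section
/- Let U₁ ≤ U₂ < 0 and V₁ ≤ V₂ be real numbers such that the closed rectangle [U₁,U₂] × [V₁,V₂] is contained in U, let δ′ > 0, and let Ψ be a smooth fixed-mode solution of the Regge–Wheeler equation on U. Define the weighted energies E^{δ′}_u := |u|^{δ′} · ∫_{V₁}^{V₂} [ (∂ᵥΨ)² + V·Ψ² ](u, v̄) dv̄ and Ē^{δ′}_v := ∫_{U₁}^{U₂} |ū|^{δ′} · [ (∂ᵤΨ)² + V·Ψ² ](ū, v) dū. Then E^{δ′}_{U₂} + Ē^{δ′}_{V₂} ≤ E^{δ′}_{U₁} + Ē^{δ′}_{V₁};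 that is, the |u|^{δ′}-weighted energy flux through the future boundary of the rectangle is bounded by that through its past boundary. (Fixed-angular-mode form of the |u|-weighted energy estimate of Lemma 6.3, obtained by multiplying the equation by |u|^{δ′}∂_TΨ; the bulk term has a favourable sign since u < 0 and δ′ > 0.) -/
open scoped ContDiff

noncomputable section

theorem HasFDerivAt.sliceU {E : Type*} [NormedAddCommGroup E] [NormedSpace ℝ E]
    {f : ℝ × ℝ → E} {f' : ℝ × ℝ →L[ℝ] E} {p : ℝ × ℝ} (hf : HasFDerivAt f f' p) :
    HasDerivAt (fun x => f (x, p.2)) (f' (1, 0)) p.1 :=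
  hf.comp_hasDerivAt p.1 ((hasDerivAt_id _).prodMk (hasDerivAt_const _ _))

theorem HasFDerivAt.sliceV {E : Type*} [NormedAddCommGroup E] [NormedSpace ℝ E]
    {f : ℝ × ℝ → E} {f' : ℝ × ℝ →L[ℝ] E} {p : ℝ × ℝ} (hf : HasFDerivAt f f' p) :
    HasDerivAt (fun y => f (p.1, y)) (f' (0, 1)) p.2 :=
  hf.comp_hasDerivAt p.2 ((hasDerivAt_const _ _).prodMk (hasDerivAt_id _))

set_option maxHeartbeats 1600000 in
/-- The `|u|^{δ'}`-weighted energy estimate for the fixed-angular-mode Regge–Wheeler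
equation (Lemma 6.3, fixed-angular-mode form). -/
theorem regge_wheeler_weighted_energy_estimate
    (M : ℝ) (hM : 0 ≤ M)
    (U : Set (ℝ × ℝ)) (hUopen : IsOpen U)
    (r : ℝ × ℝ → ℝ) (hr : ContDiffOn ℝ ∞ r U)
    (hr2M : ∀ p ∈ U, 2 * M < r p)
    (hru : ∀ p ∈ U, pdu r p = -(1 - 2 * M / r p))
    (hrv : ∀ p ∈ U, pdv r p = 1 - 2 * M / r p)
    (ℓ : ℕ) (hℓ : 2 ≤ ℓ)
    (U₁ U₂ V₁ V₂ : ℝ) (hU12 : U₁ ≤ U₂) (hU2 : U₂ < 0) (hV12 : V₁ ≤ V₂)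
    (hrect : Set.Icc U₁ U₂ ×ˢ Set.Icc V₁ V₂ ⊆ U)
    (δ' : ℝ) (hδ' : 0 < δ')
    (Ψ : ℝ × ℝ → ℝ) (hΨ : ContDiffOn ℝ ∞ Ψ U)
    (hRW : ∀ p ∈ U,
      pdu (pdv Ψ) p + Dfun M r p / (r p) ^ 2 * ((ℓ * (ℓ + 1) : ℕ) : ℝ) * Ψ p
        - 6 * M * Dfun M r p / (r p) ^ 3 * Ψ p = 0) :
    (|U₂| ^ δ' * ∫ v in V₁..V₂, ((pdv Ψ (U₂, v)) ^ 2 + Vpot M r ℓ (U₂, v) * (Ψ (U₂, v)) ^ 2)) +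
        (∫ u in U₁..U₂, |u| ^ δ' * ((pdu Ψ (u, V₂)) ^ 2 + Vpot M r ℓ (u, V₂) * (Ψ (u, V₂)) ^ 2)) ≤
      (|U₁| ^ δ' * ∫ v in V₁..V₂, ((pdv Ψ (U₁, v)) ^ 2 + Vpot M r ℓ (U₁, v) * (Ψ (U₁, v)) ^ 2)) +
        (∫ u in U₁..U₂, |u| ^ δ' * ((pdu Ψ (u, V₁)) ^ 2 + Vpot M r ℓ (u, V₁) * (Ψ (u, V₁)) ^ 2)) := by
  -- basic positivity facts
  have hrpos : ∀ p ∈ U, 0 < r p := fun p hp => lt_of_le_of_lt (by positivity) (hr2M p hp)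
  have hrne : ∀ p ∈ U, r p ≠ 0 := fun p hp => (hrpos p hp).ne'
  have hDpos : ∀ p ∈ U, 0 < 1 - 2 * M / r p := by
    intro p hp
    have h1 : 2 * M / r p < 1 := (div_lt_one (hrpos p hp)).2 (hr2M p hp)
    linarith
  have hVnn : ∀ p ∈ U, 0 ≤ Vpot M r ℓ p := by
    intro p hp
    have h1 : 6 * M / r p ≤ 3 := by
      rw [div_le_iff₀ (hrpos p hp)]
      nlinarith [hr2M p hp]
    have h2 : (6 : ℝ) ≤ ((ℓ * (ℓ + 1) : ℕ) : ℝ) := by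
      have : (6 : ℕ) ≤ ℓ * (ℓ + 1) := by nlinarith
      exact_mod_cast this
    have h3 : (0:ℝ) ≤ Dfun M r p / (r p) ^ 2 := by
      have := hDpos p hp
      have := hrpos p hp
      unfold Dfun
      positivity
    unfold Vpot
    have : (0:ℝ) ≤ ((ℓ * (ℓ + 1) : ℕ) : ℝ) - 6 * M / r p := by linarith
    exact mul_nonneg h3 this
  -- the 1D potential profile
  set lam : ℝ := ((ℓ * (ℓ + 1) : ℕ) : ℝ) with hlam_def
  set hfun : ℝ → ℝ := fun s => (1 - 2 * M / s) / s ^ 2 * (lam - 6 * M / s) with hhfun_def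
  have hVeq : ∀ p : ℝ × ℝ, Vpot M r ℓ p = hfun (r p) := fun p => rfl
  have hhC : ContDiffOn ℝ ∞ hfun {(0:ℝ)}ᶜ := by
    have hid : ContDiffOn ℝ ∞ (fun s : ℝ => s) {(0:ℝ)}ᶜ := contDiffOn_id
    have h1 : ContDiffOn ℝ ∞ (fun s : ℝ => 1 - 2 * M / s) {(0:ℝ)}ᶜ :=
      contDiffOn_const.sub (contDiffOn_const.div hid fun s hs => hs)
    have h2 : ContDiffOn ℝ ∞ (fun s : ℝ => lam - 6 * M / s) {(0:ℝ)}ᶜ :=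
      contDiffOn_const.sub (contDiffOn_const.div hid fun s hs => hs)
    exact (h1.div (hid.pow 2) (fun s hs => pow_ne_zero _ hs)).mul h2
  set d : ℝ → ℝ := deriv hfun with hd_def
  have hdC : ContinuousOn d {(0:ℝ)}ᶜ :=
    hhC.continuousOn_deriv_of_isOpen isOpen_compl_singleton (by norm_num)
  have hdh : ∀ s : ℝ, s ≠ 0 → HasDerivAt hfun (d s) s := fun s hs =>
    ((hhC.contDiffAt (isOpen_compl_singleton.mem_nhds hs)).differentiableAt
      (by norm_num)).hasDerivAt
  -- derivative machinery for Ψ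
  set Φ : ℝ × ℝ → (ℝ × ℝ →L[ℝ] ℝ) := fderiv ℝ Ψ with hΦ_def
  have hΦC : ContDiffOn ℝ ∞ Φ U := hΨ.fderiv_of_isOpen hUopen (le_of_eq rfl)
  set Φ₂ : ℝ × ℝ → ((ℝ × ℝ) →L[ℝ] (ℝ × ℝ →L[ℝ] ℝ)) := fderiv ℝ Φ with hΦ₂_def
  have hΦ₂C : ContinuousOn Φ₂ U := hΦC.continuousOn_fderiv_of_isOpen hUopen (by norm_num)
  have hΨd : ∀ p ∈ U, HasFDerivAt Ψ (Φ p) p := fun p hp =>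
    ((hΨ.contDiffAt (hUopen.mem_nhds hp)).differentiableAt (by norm_num)).hasFDerivAt
  have hΦd : ∀ p ∈ U, HasFDerivAt Φ (Φ₂ p) p := fun p hp =>
    ((hΦC.contDiffAt (hUopen.mem_nhds hp)).differentiableAt (by norm_num)).hasFDerivAt
  have hrd : ∀ p ∈ U, HasFDerivAt r (fderiv ℝ r p) p := fun p hp =>
    ((hr.contDiffAt (hUopen.mem_nhds hp)).differentiableAt (by norm_num)).hasFDerivAt
  set A : ℝ × ℝ → ℝ := fun p => Φ p (1, 0) with hA_def
  set B : ℝ × ℝ → ℝ := fun p => Φ p (0, 1) with hB_def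
  set S : ℝ × ℝ → ℝ := fun p => Φ₂ p (1, 0) (0, 1) with hS_def
  have hAeq : ∀ p ∈ U, pdu Ψ p = A p := fun p hp => ((hΨd p hp).sliceU).deriv
  have hBeq : ∀ p ∈ U, pdv Ψ p = B p := fun p hp => ((hΨd p hp).sliceV).deriv
  have hAC : ContinuousOn A U := (hΦC.continuousOn).clm_apply continuousOn_const
  have hBC : ContinuousOn B U := (hΦC.continuousOn).clm_apply continuousOn_const
  have hSC : ContinuousOn S U := (hΦ₂C.clm_apply continuousOn_const).clm_apply continuousOn_const
  have hpduC : ContinuousOn (pdu Ψ) U := hAC.congr hAeq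
  have hpdvC : ContinuousOn (pdv Ψ) U := hBC.congr hBeq
  -- eventual membership along slices
  have hmemU_u : ∀ p ∈ U, ∀ᶠ x in nhds p.1, ((x, p.2) : ℝ × ℝ) ∈ U := by
    intro p hp
    have hc : ContinuousAt (fun x : ℝ => ((x, p.2) : ℝ × ℝ)) p.1 := by fun_prop
    exact hc.preimage_mem_nhds (hUopen.mem_nhds hp)
  have hmemU_v : ∀ p ∈ U, ∀ᶠ y in nhds p.2, ((p.1, y) : ℝ × ℝ) ∈ U := by
    intro p hp
    have hc : ContinuousAt (fun y : ℝ => ((p.1, y) : ℝ × ℝ)) p.2 := by fun_prop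
    exact hc.preimage_mem_nhds (hUopen.mem_nhds hp)
  -- slice derivatives of pdv Ψ (in u) and pdu Ψ (in v), both equal S
  have hsymm : ∀ p ∈ U, Φ₂ p (0, 1) (1, 0) = S p := by
    intro p hp
    have hev : ∀ᶠ y in nhds p, HasFDerivAt Ψ (Φ y) y := by
      filter_upwards [hUopen.mem_nhds hp] with q hq using hΨd q hq
    exact second_derivative_symmetric_of_eventually hev (hΦd p hp) (0, 1) (1, 0)
  have hpdvU : ∀ p ∈ U, HasDerivAt (fun x => pdv Ψ (x, p.2)) (S p) p.1 := by
    intro p hp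
    have hBu : HasDerivAt (fun x => B (x, p.2)) (S p) p.1 :=
      ((ContinuousLinearMap.apply ℝ ℝ ((0:ℝ), (1:ℝ))).hasFDerivAt.comp p (hΦd p hp)).sliceU
    apply hBu.congr_of_eventuallyEq
    filter_upwards [hmemU_u p hp] with x hx using hBeq (x, p.2) hx
  have hpduV : ∀ p ∈ U, HasDerivAt (fun y => pdu Ψ (p.1, y)) (S p) p.2 := by
    intro p hp
    have hAv : HasDerivAt (fun y => A (p.1, y)) (Φ₂ p (0, 1) (1, 0)) p.2 :=
      ((ContinuousLinearMap.apply ℝ ℝ ((1:ℝ), (0:ℝ))).hasFDerivAt.comp p (hΦd p hp)).sliceV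
    have hAv' := hAv.congr_deriv (hsymm p hp)
    apply hAv'.congr_of_eventuallyEq
    filter_upwards [hmemU_v p hp] with y hy using hAeq (p.1, y) hy
  -- S = -V Ψ from the equation
  have hSval : ∀ p ∈ U, S p = -(Vpot M r ℓ p * Ψ p) := by
    intro p hp
    have h1 := hRW p hp
    have h2 : pdu (pdv Ψ) p = S p := (hpdvU p hp).deriv
    rw [h2] at h1
    have h3 : Vpot M r ℓ p * Ψ p =
        Dfun M r p / (r p) ^ 2 * lam * Ψ p - 6 * M * Dfun M r p / (r p) ^ 3 * Ψ p := by
      unfold Vpot Dfun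
      simp only [hlam_def]
      have := hrne p hp
      field_simp
    linarith
  -- slice derivatives of r and V
  have hrud : ∀ p ∈ U, HasDerivAt (fun x => r (x, p.2)) (-(1 - 2 * M / r p)) p.1 := by
    intro p hp
    exact ((hrd p hp).sliceU).congr_deriv (by rw [← ((hrd p hp).sliceU).deriv]; exact hru p hp)
  have hrvd : ∀ p ∈ U, HasDerivAt (fun y => r (p.1, y)) (1 - 2 * M / r p) p.2 := by
    intro p hp
    exact ((hrd p hp).sliceV).congr_deriv (by rw [← ((hrd p hp).sliceV).deriv]; exact hrv p hp)
  have hVu : ∀ p ∈ U, HasDerivAt (fun x => Vpot M r ℓ (x, p.2))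
      (d (r p) * -(1 - 2 * M / r p)) p.1 := by
    intro p hp
    exact (hdh (r p) (hrne p hp)).comp p.1 (hrud p hp)
  have hVv : ∀ p ∈ U, HasDerivAt (fun y => Vpot M r ℓ (p.1, y))
      (d (r p) * (1 - 2 * M / r p)) p.2 := by
    intro p hp
    exact (hdh (r p) (hrne p hp)).comp p.2 (hrvd p hp)
  -- energy densities and their partial derivatives
  set e₁ : ℝ × ℝ → ℝ := fun p => (pdv Ψ p) ^ 2 + Vpot M r ℓ p * (Ψ p) ^ 2 with he₁_def
  set e₂ : ℝ × ℝ → ℝ := fun p => (pdu Ψ p) ^ 2 + Vpot M r ℓ p * (Ψ p) ^ 2 with he₂_def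
  set F₁ : ℝ × ℝ → ℝ := fun p => 2 * pdv Ψ p * S p
      + (d (r p) * -(1 - 2 * M / r p)) * (Ψ p) ^ 2
      + Vpot M r ℓ p * (2 * Ψ p * pdu Ψ p) with hF₁_def
  set F₂ : ℝ × ℝ → ℝ := fun p => 2 * pdu Ψ p * S p
      + (d (r p) * (1 - 2 * M / r p)) * (Ψ p) ^ 2
      + Vpot M r ℓ p * (2 * Ψ p * pdv Ψ p) with hF₂_def
  have he₁d : ∀ u v : ℝ, ((u, v) : ℝ × ℝ) ∈ U →
      HasDerivAt (fun x => e₁ (x, v)) (F₁ (u, v)) u := by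
    intro u v h
    have hΨu : HasDerivAt (fun x => Ψ (x, v)) (pdu Ψ (u, v)) u :=
      ((hΨd (u, v) h).sliceU).congr_deriv (hAeq (u, v) h).symm
    have h1 := ((hpdvU (u, v) h).pow 2).add ((hVu (u, v) h).mul (hΨu.pow 2))
    refine h1.congr_deriv ?_
    simp only [hF₁_def, Pi.pow_apply]
    ring
  have he₂d : ∀ u v : ℝ, ((u, v) : ℝ × ℝ) ∈ U →
      HasDerivAt (fun y => e₂ (u, y)) (F₂ (u, v)) v := by
    intro u v h
    have hΨv : HasDerivAt (fun y => Ψ (u, y)) (pdv Ψ (u, v)) v :=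
      ((hΨd (u, v) h).sliceV).congr_deriv (hBeq (u, v) h).symm
    have h1 := ((hpduV (u, v) h).pow 2).add ((hVv (u, v) h).mul (hΨv.pow 2))
    refine h1.congr_deriv ?_
    simp only [hF₂_def, Pi.pow_apply]
    ring
  have hsum : ∀ p ∈ U, F₁ p + F₂ p = 0 := by
    intro p hp
    have hs := hSval p hp
    simp only [hF₁_def, hF₂_def]
    rw [hs]
    ring
  -- continuity of everything on U
  have hΨC : ContinuousOn Ψ U := hΨ.continuousOn
  have hrC : ContinuousOn r U := hr.continuousOn
  have hVC : ContinuousOn (Vpot M r ℓ) U := by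
    have : ContinuousOn (fun p => hfun (r p)) U :=
      hhC.continuousOn.comp hrC (fun q hq => hrne q hq)
    exact this
  have hdrC : ContinuousOn (fun p => d (r p)) U := hdC.comp hrC (fun q hq => hrne q hq)
  have hDC : ContinuousOn (fun p => 1 - 2 * M / r p) U :=
    continuousOn_const.sub (continuousOn_const.div hrC hrne)
  have he₁C : ContinuousOn e₁ U := (hpdvC.pow 2).add (hVC.mul (hΨC.pow 2))
  have he₂C : ContinuousOn e₂ U := (hpduC.pow 2).add (hVC.mul (hΨC.pow 2))
  have hF₁C : ContinuousOn F₁ U :=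
    (((continuousOn_const.mul hpdvC).mul hSC).add
      ((hdrC.mul hDC.neg).mul (hΨC.pow 2))).add
      (hVC.mul ((continuousOn_const.mul hΨC).mul hpduC))
  have hF₂C : ContinuousOn F₂ U :=
    (((continuousOn_const.mul hpduC).mul hSC).add
      ((hdrC.mul hDC).mul (hΨC.pow 2))).add
      (hVC.mul ((continuousOn_const.mul hΨC).mul hpdvC))
  -- geometry: a slightly larger compact rectangle inside U
  have hKcomp : IsCompact (Set.Icc U₁ U₂ ×ˢ Set.Icc V₁ V₂) :=
    isCompact_Icc.prod isCompact_Icc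
  obtain ⟨δ, hδpos, hδsub⟩ := hKcomp.exists_thickening_subset_open hUopen hrect
  set ε : ℝ := min (δ / 2) (-U₂ / 2) with hε_def
  have hεpos : 0 < ε := lt_min (by linarith) (by linarith)
  have hεδ : ε ≤ δ / 2 := min_le_left _ _
  have hεU₂ : ε ≤ -U₂ / 2 := min_le_right _ _
  set a : ℝ := U₁ - ε with ha_def
  set b : ℝ := U₂ + ε with hb_def
  have hab : a < U₁ ∧ U₂ < b := ⟨by simp [ha_def]; linarith, by simp [hb_def]; linarith⟩
  have hb0 : b < 0 := by simp only [hb_def]; linarith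
  have hK'U : Set.Icc a b ×ˢ Set.Icc V₁ V₂ ⊆ U := by
    intro p hp
    obtain ⟨hp1, hp2⟩ := hp
    apply hδsub
    rw [Metric.mem_thickening_iff]
    refine ⟨(max U₁ (min p.1 U₂), p.2), ⟨⟨le_max_left _ _, max_le hU12 (min_le_right _ _)⟩, hp2⟩, ?_⟩
    rw [Prod.dist_eq]
    have h2 : dist p.2 (max U₁ (min p.1 U₂), p.2).2 = 0 := by simp
    have h1 : dist p.1 (max U₁ (min p.1 U₂)) ≤ ε := by
      rw [Real.dist_eq, abs_le]
      rcases le_total p.1 U₁ with h | h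
      · have hmin : min p.1 U₂ = p.1 := min_eq_left (h.trans hU12)
        rw [hmin, max_eq_left h]
        constructor <;> [skip; linarith]
        have := hp1.1
        simp only [ha_def] at this
        linarith
      · rcases le_total p.1 U₂ with h' | h'
        · rw [min_eq_left h', max_eq_right h]
          constructor <;> linarith [hεpos.le]
        · rw [min_eq_right h', max_eq_right (hU12)]
          have := hp1.2
          simp only [hb_def] at this
          constructor <;> linarith
    calc max (dist p.1 _) (dist p.2 _) ≤ max ε 0 := max_le_max h1 (le_of_eq h2)
      _ = ε := by simp [hεpos.le]
      _ < δ := by linarith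
  have hK'comp : IsCompact (Set.Icc a b ×ˢ Set.Icc V₁ V₂) := isCompact_Icc.prod isCompact_Icc
  have hIccab : Set.Icc U₁ U₂ ⊆ Set.Ioo a b := fun x hx => ⟨by linarith [hx.1, hab.1], by linarith [hx.2, hab.2]⟩
  have hmemK : ∀ u ∈ Set.Icc U₁ U₂, ∀ v ∈ Set.Icc V₁ V₂, ((u, v) : ℝ × ℝ) ∈ U :=
    fun u hu v hv => hrect ⟨hu, hv⟩
  have hmemK' : ∀ u ∈ Set.Icc a b, ∀ v ∈ Set.Icc V₁ V₂, ((u, v) : ℝ × ℝ) ∈ U :=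
    fun u hu v hv => hK'U ⟨hu, hv⟩
  -- bound for F₁ on the bigger rectangle
  obtain ⟨Cb, hCb⟩ := hK'comp.exists_bound_of_continuousOn (hF₁C.mono hK'U)
  -- the weight
  set w : ℝ → ℝ := fun u => |u| ^ δ' with hw_def
  set w' : ℝ → ℝ := fun u => δ' * (-u) ^ (δ' - 1) * (-1) with hw'_def
  have hwd : ∀ u : ℝ, u < 0 → HasDerivAt w (w' u) u := by
    intro u hu
    have h1 : HasDerivAt (fun y : ℝ => y ^ δ') (δ' * (-u) ^ (δ' - 1)) (-u) :=
      Real.hasDerivAt_rpow_const (Or.inl (by linarith))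
    have h2 : HasDerivAt (fun u : ℝ => (-u) ^ δ') (δ' * (-u) ^ (δ' - 1) * (-1)) u :=
      h1.comp u (hasDerivAt_neg u)
    apply h2.congr_of_eventuallyEq
    filter_upwards [Iio_mem_nhds hu] with x hx
    simp only [hw_def]
    rw [abs_of_neg hx]
  have hwc : Continuous w := continuous_abs.rpow_const (fun x => Or.inr hδ'.le)
  have hw'np : ∀ u : ℝ, u < 0 → w' u ≤ 0 := by
    intro u hu
    have : 0 ≤ δ' * (-u) ^ (δ' - 1) :=
      mul_nonneg hδ'.le (Real.rpow_nonneg (by linarith) _)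
    simp only [hw'_def]
    nlinarith
  -- the u-energy as a function of u, and its derivative
  set I : ℝ → ℝ := fun u => ∫ v in V₁..V₂, e₁ (u, v) with hI_def
  have hIcont_slice : ∀ u ∈ Set.Icc a b, ContinuousOn (fun v => e₁ (u, v)) (Set.Icc V₁ V₂) := by
    intro u hu
    apply (he₁C.comp (Continuous.continuousOn (by fun_prop)))
    intro v hv
    exact hmemK' u hu v hv
  have hF₁cont_slice : ∀ u ∈ Set.Icc a b, ContinuousOn (fun v => F₁ (u, v)) (Set.Icc V₁ V₂) := by
    intro u hu
    apply (hF₁C.comp (Continuous.continuousOn (by fun_prop)))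
    intro v hv
    exact hmemK' u hu v hv
  have hF₂cont_slice : ∀ u ∈ Set.Icc a b, ContinuousOn (fun v => F₂ (u, v)) (Set.Icc V₁ V₂) := by
    intro u hu
    apply (hF₂C.comp (Continuous.continuousOn (by fun_prop)))
    intro v hv
    exact hmemK' u hu v hv
  have huIoc : Set.uIoc V₁ V₂ ⊆ Set.Icc V₁ V₂ := by
    rw [Set.uIoc_of_le hV12]; exact Set.Ioc_subset_Icc_self
  have huIcc : Set.uIcc V₁ V₂ = Set.Icc V₁ V₂ := Set.uIcc_of_le hV12
  have hId : ∀ u ∈ Set.Icc U₁ U₂,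
      HasDerivAt I (∫ v in V₁..V₂, F₁ (u, v)) u := by
    intro u hu
    have huab : u ∈ Set.Icc a b := Set.Ioo_subset_Icc_self (hIccab hu)
    have hball : Metric.ball u ε ⊆ Set.Icc a b := by
      intro x hx
      rw [Metric.mem_ball, Real.dist_eq, abs_lt] at hx
      exact ⟨by simp only [ha_def]; linarith [hu.1], by simp only [hb_def]; linarith [hu.2]⟩
    refine (intervalIntegral.hasDerivAt_integral_of_dominated_loc_of_deriv_le
      (F := fun x v => e₁ (x, v)) (F' := fun x v => F₁ (x, v)) (bound := fun _ => Cb)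
      (Metric.ball_mem_nhds u hεpos) ?_ ?_ ?_ ?_ ?_ ?_).2
    · filter_upwards [Metric.ball_mem_nhds u hεpos] with x hx
      exact ((hIcont_slice x (hball hx)).mono huIoc).aestronglyMeasurable measurableSet_uIoc
    · exact ((hIcont_slice u huab).mono (le_of_eq huIcc)).intervalIntegrable
    · exact ((hF₁cont_slice u huab).mono huIoc).aestronglyMeasurable measurableSet_uIoc
    · apply MeasureTheory.ae_of_all
      intro t ht x hx
      exact hCb (x, t) ⟨hball hx, huIoc ht⟩
    · exact intervalIntegrable_const
    · apply MeasureTheory.ae_of_all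
      intro t ht x hx
      exact he₁d x t (hmemK' x (hball hx) t (huIoc ht))
  -- FTC in the v direction and the key cancellation
  have hIeq : ∀ u ∈ Set.Icc U₁ U₂,
      (∫ v in V₁..V₂, F₁ (u, v)) = -(e₂ (u, V₂) - e₂ (u, V₁)) := by
    intro u hu
    have huab : u ∈ Set.Icc a b := Set.Ioo_subset_Icc_self (hIccab hu)
    have hFTC : (∫ v in V₁..V₂, F₂ (u, v)) = e₂ (u, V₂) - e₂ (u, V₁) := by
      apply intervalIntegral.integral_eq_sub_of_hasDerivAt
      · intro v hv
        exact he₂d u v (hmemK u hu v (huIcc ▸ hv))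
      · exact ((hF₂cont_slice u huab).mono (le_of_eq huIcc)).intervalIntegrable
    rw [← hFTC, ← intervalIntegral.integral_neg]
    apply intervalIntegral.integral_congr
    intro v hv
    have := hsum (u, v) (hmemK u hu v (huIcc ▸ hv))
    simp only []
    linarith
  -- accumulating boundary integrals
  have hgcont : ∀ c ∈ Set.Icc V₁ V₂, ContinuousOn (fun x => w x * e₂ (x, c)) (Set.Ioo a b) := by
    intro c hc
    apply (hwc.continuousOn).mul
    apply he₂C.comp (Continuous.continuousOn (by fun_prop))
    intro x hx
    exact hmemK' x (Set.Ioo_subset_Icc_self hx) c hc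
  have hJd : ∀ c ∈ Set.Icc V₁ V₂, ∀ u ∈ Set.Icc U₁ U₂,
      HasDerivAt (fun x => ∫ t in U₁..x, w t * e₂ (t, c)) (w u * e₂ (u, c)) u := by
    intro c hc u hu
    have huab : u ∈ Set.Ioo a b := hIccab hu
    apply intervalIntegral.integral_hasDerivAt_right
    · apply ((hgcont c hc).mono ?_).intervalIntegrable
      intro x hx
      rw [Set.uIcc_of_le hu.1] at hx
      exact hIccab ⟨hx.1, hx.2.trans hu.2⟩
    · exact (hgcont c hc).stronglyMeasurableAtFilter isOpen_Ioo u huab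
    · exact ((hgcont c hc).continuousAt (isOpen_Ioo.mem_nhds huab))
  -- the total energy function and its derivative
  set G : ℝ → ℝ := fun u => w u * I u +
      ((∫ t in U₁..u, w t * e₂ (t, V₂)) - ∫ t in U₁..u, w t * e₂ (t, V₁)) with hG_def
  have hGd : ∀ u ∈ Set.Icc U₁ U₂, HasDerivAt G (w' u * I u) u := by
    intro u hu
    have hu0 : u < 0 := lt_of_le_of_lt hu.2 hU2
    have h1 := (hwd u hu0).mul (hId u hu)
    have h2 := (hJd V₂ ⟨hV12, le_refl _⟩ u hu).sub (hJd V₁ ⟨le_refl _, hV12⟩ u hu)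
    have h3 := h1.add h2
    refine h3.congr_deriv ?_
    rw [hIeq u hu]
    ring
  -- the bulk term has a favourable sign
  have hInn : ∀ u ∈ Set.Icc U₁ U₂, 0 ≤ I u := by
    intro u hu
    apply intervalIntegral.integral_nonneg hV12
    intro v hv
    have hmem := hmemK u hu v hv
    have h1 : 0 ≤ Vpot M r ℓ (u, v) := hVnn _ hmem
    simp only [he₁_def]
    positivity
  have hGanti : AntitoneOn G (Set.Icc U₁ U₂) := by
    apply antitoneOn_of_deriv_nonpos (convex_Icc _ _)
    · intro u hu
      exact (hGd u hu).continuousAt.continuousWithinAt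
    · intro u hu
      rw [interior_Icc] at hu
      exact ((hGd u (Set.Ioo_subset_Icc_self hu)).differentiableAt).differentiableWithinAt
    · intro u hu
      rw [interior_Icc] at hu
      have hu' := Set.Ioo_subset_Icc_self hu
      rw [(hGd u hu').deriv]
      have hu0 : u < 0 := lt_of_le_of_lt hu'.2 hU2
      exact mul_nonpos_of_nonpos_of_nonneg (hw'np u hu0) (hInn u hu')
  have hfin := hGanti (Set.left_mem_Icc.2 hU12) (Set.right_mem_Icc.2 hU12) hU12
  simp only [hG_def, hI_def, intervalIntegral.integral_same, sub_zero] at hfin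
  simp only [he₁_def, he₂_def, hw_def] at hfin
  linarith
end
end

section
/- Let α : U → ℝ be smooth (no equation is assumed), and let u, v₁, v be real numbers with v₁ ≤ v such that the segment {u} × [v₁, v] is contained in U. Then for all integers k ≥ 0 and j ≥ 0: ( ((r²/D)∂ᵥ)^k α )(u, v) = Σ_{i=0}^{j} (1/i!) · ( 1/r(u,v₁) − 1/r(u,v) )^i · ( ((r²/D)∂ᵥ)^(k+i) α )(u, v₁) + ∫_{v₁}^{v} (D/r²)(u,t₁) ∫_{v₁}^{t₁} (D/r²)(u,t₂) ⋯ ∫_{v₁}^{t_j} (D/r²)(u,t_{j+1}) · ( ((r²/D)∂ᵥ)^(k+j+1) α )(u, t_{j+1}) dt_{j+1} ⋯ dt₁, where the remainder consists of j+1 nested integrals. (This is the identity of Proposition 10.5, eq. (10.13), stated there with k = ℓ−s−j; in particular the remainder vanishes identically when ((r²/D)∂ᵥ)^(k+j+1) α ≡ 0.) -/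
open scoped ContDiff

noncomputable section

/-- The weighted transversal derivative operator `(r²/D)∂ᵥ`. -/
def Pv (M : ℝ) (r f : ℝ × ℝ → ℝ) : ℝ × ℝ → ℝ := fun p => (r p) ^ 2 / Dfun M r p * pdv f p

/-- `nestInt v₁ w f m` is the `(m+1)`-fold nested integral
`∫_{v₁}^{t} w(t₁) ∫_{v₁}^{t₁} w(t₂) ⋯ ∫_{v₁}^{t_m} w(t_{m+1}) f(t_{m+1}) dt_{m+1} ⋯ dt₁`. -/
noncomputable def nestInt (v₁ : ℝ) (w f : ℝ → ℝ) : ℕ → ℝ → ℝ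
  | 0, t => ∫ x in v₁..t, w x * f x
  | m + 1, t => ∫ x in v₁..t, w x * nestInt v₁ w f m x

open Set MeasureTheory intervalIntegral

/-! ### Auxiliary lemmas -/

lemma aux_ftc {v₁ v : ℝ} {g g' : ℝ → ℝ}
    (hg : ∀ x ∈ Icc v₁ v, HasDerivAt g (g' x) x)
    (hg' : ContinuousOn g' (Icc v₁ v)) {t : ℝ} (ht : t ∈ Icc v₁ v) :
    ∫ x in v₁..t, g' x = g t - g v₁ := by
  have hsub : uIcc v₁ t ⊆ Icc v₁ v := by
    rw [uIcc_of_le ht.1]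
    exact Icc_subset_Icc le_rfl ht.2
  exact integral_eq_sub_of_hasDerivAt (fun x hx => hg x (hsub hx))
    ((hg'.mono hsub).intervalIntegrable)

lemma nestInt_continuousOn {v₁ v : ℝ} (hv : v₁ ≤ v) {w f : ℝ → ℝ}
    (hw : ContinuousOn w (Icc v₁ v)) (hf : ContinuousOn f (Icc v₁ v)) :
    ∀ m, ContinuousOn (nestInt v₁ w f m) (Icc v₁ v) := by
  intro m
  induction m with
  | zero =>
      show ContinuousOn (fun t => ∫ x in v₁..t, w x * f x) (Icc v₁ v)
      have h := continuousOn_primitive_interval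
        (f := fun x => w x * f x) (a := v₁) (b := v) (μ := volume) ?_
      · rwa [uIcc_of_le hv] at h
      · rw [uIcc_of_le hv]
        exact (hw.mul hf).integrableOn_Icc
  | succ m ih =>
      show ContinuousOn (fun t => ∫ x in v₁..t, w x * nestInt v₁ w f m x) (Icc v₁ v)
      have h := continuousOn_primitive_interval
        (f := fun x => w x * nestInt v₁ w f m x) (a := v₁) (b := v) (μ := volume) ?_
      · rwa [uIcc_of_le hv] at h
      · rw [uIcc_of_le hv]
        exact (hw.mul ih).integrableOn_Icc

lemma key_step {v₁ v : ℝ} (hv : v₁ ≤ v) {w ρ : ℝ → ℝ} {F : ℕ → ℝ → ℝ}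
    (hw : ContinuousOn w (Icc v₁ v)) (hρ0 : ρ v₁ = 0)
    (hρ : ∀ x ∈ Icc v₁ v, HasDerivAt ρ (w x) x)
    (hF : ∀ m, ∀ x ∈ Icc v₁ v, HasDerivAt (F m) (w x * F (m + 1) x) x) :
    ∀ j m, ∀ t ∈ Icc v₁ v,
      nestInt v₁ w (F m) j t
        = ρ t ^ (j + 1) / (Nat.factorial (j + 1) : ℝ) * F m v₁
          + nestInt v₁ w (F (m + 1)) (j + 1) t := by
  have hFc : ∀ m, ContinuousOn (F m) (Icc v₁ v) :=
    fun m x hx => ((hF m x hx).differentiableAt.continuousAt).continuousWithinAt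
  intro j
  induction j with
  | zero =>
      intro m t ht
      have hsub : uIcc v₁ t ⊆ Icc v₁ v := by
        rw [uIcc_of_le ht.1]; exact Icc_subset_Icc le_rfl ht.2
      show (∫ x in v₁..t, w x * F m x)
          = ρ t ^ 1 / (Nat.factorial 1 : ℝ) * F m v₁
            + ∫ x in v₁..t, w x * nestInt v₁ w (F (m + 1)) 0 x
      have hcongr : EqOn (fun x => w x * F m x)
          (fun x => F m v₁ * w x + w x * nestInt v₁ w (F (m + 1)) 0 x) (uIcc v₁ t) := by
        intro x hx
        have hx' : x ∈ Icc v₁ v := hsub hx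
        have : nestInt v₁ w (F (m + 1)) 0 x = F m x - F m v₁ := by
          show (∫ y in v₁..x, w y * F (m + 1) y) = F m x - F m v₁
          exact aux_ftc (hF m) (hw.mul (hFc (m + 1))) hx'
        simp only [this]
        ring
      rw [integral_congr hcongr, intervalIntegral.integral_add, intervalIntegral.integral_const_mul]
      · have : (∫ x in v₁..t, w x) = ρ t := by
          have := aux_ftc hρ hw ht; rw [hρ0, sub_zero] at this; exact this
        rw [this]
        simp [Nat.factorial]
        ring
      · exact (continuousOn_const.mul (hw.mono hsub)).intervalIntegrable
      · exact ((hw.mono hsub).mul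
          (((nestInt_continuousOn hv hw (hFc (m + 1)) 0)).mono hsub)).intervalIntegrable
  | succ j ih =>
      intro m t ht
      have hsub : uIcc v₁ t ⊆ Icc v₁ v := by
        rw [uIcc_of_le ht.1]; exact Icc_subset_Icc le_rfl ht.2
      show (∫ x in v₁..t, w x * nestInt v₁ w (F m) j x)
          = ρ t ^ (j + 2) / (Nat.factorial (j + 2) : ℝ) * F m v₁
            + ∫ x in v₁..t, w x * nestInt v₁ w (F (m + 1)) (j + 1) x
      have hcongr : EqOn (fun x => w x * nestInt v₁ w (F m) j x)
          (fun x => (F m v₁ / (Nat.factorial (j + 1) : ℝ)) * (w x * ρ x ^ (j + 1))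
            + w x * nestInt v₁ w (F (m + 1)) (j + 1) x) (uIcc v₁ t) := by
        intro x hx
        have hx' : x ∈ Icc v₁ v := hsub hx
        show w x * nestInt v₁ w (F m) j x
            = F m v₁ / (Nat.factorial (j + 1) : ℝ) * (w x * ρ x ^ (j + 1))
              + w x * nestInt v₁ w (F (m + 1)) (j + 1) x
        rw [ih m x hx']
        ring
      rw [integral_congr hcongr, intervalIntegral.integral_add, intervalIntegral.integral_const_mul]
      · have hpow : (∫ x in v₁..t, w x * ρ x ^ (j + 1))
            = ρ t ^ (j + 2) / ((j : ℝ) + 2) := by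
          have hder : ∀ x ∈ Icc v₁ v,
              HasDerivAt (fun y => ρ y ^ (j + 2) / ((j : ℝ) + 2)) (w x * ρ x ^ (j + 1)) x := by
            intro x hx
            have h1 := ((hρ x hx).fun_pow (j + 2)).div_const ((j : ℝ) + 2)
            refine h1.congr_deriv ?_
            have : ((j : ℝ) + 2) ≠ 0 := by positivity
            rw [show j + 2 - 1 = j + 1 from rfl]; push_cast; rw [div_eq_iff this]
            ring
          have hcont : ContinuousOn (fun x => w x * ρ x ^ (j + 1)) (Icc v₁ v) := by
            have hρc : ContinuousOn ρ (Icc v₁ v) :=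
              fun x hx => ((hρ x hx).differentiableAt.continuousAt).continuousWithinAt
            exact hw.mul (hρc.pow (j + 1))
          have := aux_ftc hder hcont ht
          rw [hρ0] at this
          simpa using this
        rw [hpow]
        have h2 : ((Nat.factorial (j + 2) : ℝ)) = ((j : ℝ) + 2) * (Nat.factorial (j + 1) : ℝ) := by
          rw [Nat.factorial_succ]
          push_cast
          ring
        have hne1 : ((Nat.factorial (j + 1) : ℝ)) ≠ 0 := by
          exact_mod_cast Nat.factorial_ne_zero (j + 1)
        have hne2 : ((j : ℝ) + 2) ≠ 0 := by positivity
        rw [h2]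
        field_simp
      · refine (continuousOn_const.mul ((hw.mono hsub).mul ?_)).intervalIntegrable
        have hρc : ContinuousOn ρ (Icc v₁ v) :=
          fun x hx => ((hρ x hx).differentiableAt.continuousAt).continuousWithinAt
        exact (hρc.pow (j + 1)).mono hsub
      · exact ((hw.mono hsub).mul
          (((nestInt_continuousOn hv hw (hFc (m + 1)) (j + 1))).mono hsub)).intervalIntegrable

lemma main_abstract {v₁ v : ℝ} (hv : v₁ ≤ v) {w ρ : ℝ → ℝ} {F : ℕ → ℝ → ℝ}
    (hw : ContinuousOn w (Icc v₁ v)) (hρ0 : ρ v₁ = 0)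
    (hρ : ∀ x ∈ Icc v₁ v, HasDerivAt ρ (w x) x)
    (hF : ∀ m, ∀ x ∈ Icc v₁ v, HasDerivAt (F m) (w x * F (m + 1) x) x)
    (k j : ℕ) :
    F k v = (∑ i ∈ Finset.range (j + 1),
        1 / (Nat.factorial i : ℝ) * ρ v ^ i * F (k + i) v₁)
      + nestInt v₁ w (F (k + j + 1)) j v := by
  have hFc : ∀ m, ContinuousOn (F m) (Icc v₁ v) :=
    fun m x hx => ((hF m x hx).differentiableAt.continuousAt).continuousWithinAt
  have hvmem : v ∈ Icc v₁ v := ⟨hv, le_rfl⟩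
  induction j with
  | zero =>
      have h0 : nestInt v₁ w (F (k + 0 + 1)) 0 v = F k v - F k v₁ := by
        show (∫ x in v₁..v, w x * F (k + 1) x) = F k v - F k v₁
        exact aux_ftc (hF k) (hw.mul (hFc (k + 1))) hvmem
      rw [h0]
      simp
  | succ j ih =>
      have hfac : (Nat.factorial (j + 1) : ℝ) ≠ 0 := by
        exact_mod_cast Nat.factorial_ne_zero (j + 1)
      rw [ih, key_step hv hw hρ0 hρ hF j (k + j + 1) v hvmem,
        Finset.sum_range_succ _ (j + 1), ← Nat.add_assoc k j 1]
      field_simp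
      ring

/-- Slice derivative in the second coordinate of a smooth function on an open set. -/
lemma slice_hasDerivAt {f : ℝ × ℝ → ℝ} {U : Set (ℝ × ℝ)} (hU : IsOpen U)
    (hf : ContDiffOn ℝ ∞ f U) {p : ℝ × ℝ} (hp : p ∈ U) :
    HasDerivAt (fun y => f (p.1, y)) (pdv f p) p.2 := by
  have hd : DifferentiableAt ℝ f p :=
    (hf.contDiffAt (hU.mem_nhds hp)).differentiableAt (by simp)
  have h1 : HasDerivAt (fun y => ((p.1 : ℝ), y)) ((0 : ℝ), (1 : ℝ)) p.2 :=
    (hasDerivAt_const _ _).prodMk (hasDerivAt_id _)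
  have h2 : HasDerivAt (fun y => f (p.1, y)) (fderiv ℝ f p (0, 1)) p.2 :=
    hd.hasFDerivAt.comp_hasDerivAt p.2 h1
  have h3 : pdv f p = fderiv ℝ f p (0, 1) := h2.deriv
  rw [pdv] at h3 ⊢
  rw [h3]
  exact h2

lemma pdv_contDiffOn {f : ℝ × ℝ → ℝ} {U : Set (ℝ × ℝ)} (hU : IsOpen U)
    (hf : ContDiffOn ℝ ∞ f U) : ContDiffOn ℝ ∞ (pdv f) U := by
  have h1 : ContDiffOn ℝ ∞ (fun p => fderiv ℝ f p (0, 1)) U :=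
    (hf.fderiv_of_isOpen hU (by simp)).clm_apply contDiffOn_const
  refine h1.congr fun p hp => ?_
  have hd : DifferentiableAt ℝ f p :=
    (hf.contDiffAt (hU.mem_nhds hp)).differentiableAt (by simp)
  have h1' : HasDerivAt (fun y => ((p.1 : ℝ), y)) ((0 : ℝ), (1 : ℝ)) p.2 :=
    (hasDerivAt_const _ _).prodMk (hasDerivAt_id _)
  exact (hd.hasFDerivAt.comp_hasDerivAt p.2 h1').deriv

lemma Pv_contDiffOn {M : ℝ} {r : ℝ × ℝ → ℝ} {U : Set (ℝ × ℝ)} (hU : IsOpen U)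
    (hr : ContDiffOn ℝ ∞ r U) (hr0 : ∀ p ∈ U, r p ≠ 0) (hD : ∀ p ∈ U, Dfun M r p ≠ 0)
    {f : ℝ × ℝ → ℝ} (hf : ContDiffOn ℝ ∞ f U) : ContDiffOn ℝ ∞ (Pv M r f) U := by
  have hDc : ContDiffOn ℝ ∞ (Dfun M r) U := by
    show ContDiffOn ℝ ∞ (fun p => 1 - 2 * M / r p) U
    exact contDiffOn_const.sub (contDiffOn_const.div hr hr0)
  exact ((hr.pow 2).div hDc hD).mul (pdv_contDiffOn hU hf)

/-- The identity of Proposition 10.5, eq. (10.13): Taylor expansion with nested integral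
remainder for the weighted transversal derivatives `((r²/D)∂ᵥ)^k α` along an outgoing cone. -/
theorem nested_transversal_identity
    (M : ℝ) (hM : 0 ≤ M)
    (U : Set (ℝ × ℝ)) (hUopen : IsOpen U)
    (r : ℝ × ℝ → ℝ) (hr : ContDiffOn ℝ ∞ r U)
    (hr2M : ∀ p ∈ U, 2 * M < r p)
    (hru : ∀ p ∈ U, pdu r p = -(1 - 2 * M / r p))
    (hrv : ∀ p ∈ U, pdv r p = 1 - 2 * M / r p)
    (α : ℝ × ℝ → ℝ) (hα : ContDiffOn ℝ ∞ α U)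
    (u v₁ v : ℝ) (hv : v₁ ≤ v)
    (hseg : ∀ t ∈ Set.Icc v₁ v, (u, t) ∈ U)
    (k j : ℕ) :
    ((Pv M r)^[k] α) (u, v) =
      (∑ i ∈ Finset.range (j + 1),
          1 / (Nat.factorial i : ℝ) * (1 / r (u, v₁) - 1 / r (u, v)) ^ i *
            ((Pv M r)^[k + i] α) (u, v₁)) +
        nestInt v₁ (fun t => Dfun M r (u, t) / (r (u, t)) ^ 2)
          (fun t => ((Pv M r)^[k + j + 1] α) (u, t)) j v := by
  -- positivity facts
  have hrpos : ∀ p ∈ U, 0 < r p := fun p hp =>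
    lt_of_le_of_lt (by positivity) (hr2M p hp)
  have hr0 : ∀ p ∈ U, r p ≠ 0 := fun p hp => (hrpos p hp).ne'
  have hDpos : ∀ p ∈ U, 0 < Dfun M r p := by
    intro p hp
    have h1 : 0 < r p := hrpos p hp
    have h2 : 2 * M < r p := hr2M p hp
    show 0 < 1 - 2 * M / r p
    rw [sub_pos, div_lt_one h1]
    exact h2
  have hD0 : ∀ p ∈ U, Dfun M r p ≠ 0 := fun p hp => (hDpos p hp).ne'
  -- smoothness of the iterates
  have hG : ∀ m, ContDiffOn ℝ ∞ ((Pv M r)^[m] α) U := by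
    intro m
    induction m with
    | zero => exact hα
    | succ m ih =>
        rw [Function.iterate_succ_apply']
        exact Pv_contDiffOn hUopen hr hr0 hD0 ih
  -- set up the abstract data
  set w : ℝ → ℝ := fun t => Dfun M r (u, t) / (r (u, t)) ^ 2 with hw_def
  set ρ : ℝ → ℝ := fun t => 1 / r (u, v₁) - 1 / r (u, t) with hρ_def
  set F : ℕ → ℝ → ℝ := fun m t => ((Pv M r)^[m] α) (u, t) with hF_def
  -- continuity of w
  have hrc : ContinuousOn (fun t => r (u, t)) (Set.Icc v₁ v) :=
    hr.continuousOn.comp ((Continuous.prodMk_right u).continuousOn) (fun t ht => hseg t ht)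
  have hwc : ContinuousOn w (Set.Icc v₁ v) := by
    have hDcont : ContinuousOn (fun t => Dfun M r (u, t)) (Set.Icc v₁ v) := by
      show ContinuousOn (fun t => 1 - 2 * M / r (u, t)) (Set.Icc v₁ v)
      exact continuousOn_const.sub (continuousOn_const.div hrc
        (fun t ht => hr0 _ (hseg t ht)))
    exact hDcont.div (hrc.pow 2) (fun t ht => pow_ne_zero 2 (hr0 _ (hseg t ht)))
  -- derivative of ρ
  have hρ0 : ρ v₁ = 0 := by simp [hρ_def]
  have hρ : ∀ x ∈ Set.Icc v₁ v, HasDerivAt ρ (w x) x := by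
    intro x hx
    have hpU : (u, x) ∈ U := hseg x hx
    have hrd : HasDerivAt (fun t => r (u, t)) (Dfun M r (u, x)) x := by
      have := slice_hasDerivAt hUopen hr hpU
      rwa [hrv _ hpU] at this
    have hinv : HasDerivAt (fun t => (r (u, t))⁻¹)
        (-(Dfun M r (u, x)) / (r (u, x)) ^ 2) x := hrd.inv (hr0 _ hpU)
    have h2 : HasDerivAt (fun t => 1 / r (u, v₁) - 1 / r (u, t))
        (0 - -(Dfun M r (u, x)) / (r (u, x)) ^ 2) x := by
      simp only [one_div]
      exact (hasDerivAt_const x _).sub hinv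
    convert h2 using 1
    simp [hw_def]
    ring
  -- derivative relation for F
  have hF : ∀ m, ∀ x ∈ Set.Icc v₁ v, HasDerivAt (F m) (w x * F (m + 1) x) x := by
    intro m x hx
    have hpU : (u, x) ∈ U := hseg x hx
    have hsl : HasDerivAt (fun t => ((Pv M r)^[m] α) (u, t))
        (pdv ((Pv M r)^[m] α) (u, x)) x := slice_hasDerivAt hUopen (hG m) hpU
    have hval : w x * F (m + 1) x = pdv ((Pv M r)^[m] α) (u, x) := by
      have hFe : F (m + 1) x = (r (u, x)) ^ 2 / Dfun M r (u, x) *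
          pdv ((Pv M r)^[m] α) (u, x) := by
        show ((Pv M r)^[m + 1] α) (u, x) = _
        rw [Function.iterate_succ_apply']
        rfl
      rw [hFe, hw_def]
      have h1 : r (u, x) ≠ 0 := hr0 _ hpU
      have h2 : Dfun M r (u, x) ≠ 0 := hD0 _ hpU
      field_simp
    rw [← hval] at hsl
    exact hsl
  have := main_abstract hv hwc hρ0 hρ hF k j
  exact this
end
end

section
/- Let p ∈ ℕ with p ≤ ℓ and let S₀, …, S_{ℓ−s} be real numbers. The function α(r₀, r) := r₀^(s−p) · Σ_{n=0}^{ℓ−s} S_n · (r₀/r)^n solves the flat (M = 0) fixed-mode spin-s Teukolsky equation on Ω if and only if for every 0 ≤ n ≤ ℓ−s one has S_n = S_{ℓ−s} · ( (−1)^(ℓ−s+n) · (ℓ−s)! · (ℓ−p)! / (2ℓ)! ) · ( (ℓ+s+n)! / ( n! · (s−p+n)! · (ℓ−s−n)! ) ), where 1/(s−p+n)! is interpreted as 0 when s−p+n < 0. Moreover, for any coefficients, ( (r²∂_r)^(ℓ−s) α )(r₀, r) = (−1)^(ℓ−s) · (ℓ−s)! · S_{ℓ−s} · r₀^(ℓ−p).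 (Proposition 13.1.) -/
noncomputable section

/-- Partial derivative with respect to the first (`r₀`) coordinate. -/
def pd1 (f : ℝ × ℝ → ℝ) : ℝ × ℝ → ℝ := fun p => deriv (fun x => f (x, p.2)) p.1

/-- Partial derivative with respect to the second (`r`) coordinate. -/
def pd2 (f : ℝ × ℝ → ℝ) : ℝ × ℝ → ℝ := fun p => deriv (fun y => f (p.1, y)) p.2

/-- The region `Ω = {(r₀, r) : 0 < r₀ < r}`. -/
def OmegaSet : Set (ℝ × ℝ) := {q | 0 < q.1 ∧ q.1 < q.2}

/-- Factorial of a (nonnegative) integer, as a real number. -/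
def zfactR (n : ℤ) : ℝ := (Nat.factorial n.toNat : ℝ)

/-- The reciprocal factorial `1/n!`, interpreted as `0` for negative integers `n`. -/
def invZfact (n : ℤ) : ℝ := if 0 ≤ n then ((Nat.factorial n.toNat : ℝ))⁻¹ else 0

/-- `α` solves the flat (`M = 0`) fixed-mode spin-`s` Teukolsky equation
`−(∂_{r₀} + ∂_r)(r^(−2s) ∂_r α) = Λ r^(−2−2s) α` on `Ω`, with `Λ = −(ℓ−s)(ℓ+s+1)`. -/
def FlatTeuk (s ℓ : ℤ) (α : ℝ × ℝ → ℝ) : Prop :=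
  ∀ q ∈ OmegaSet,
    -(pd1 (fun x => x.2 ^ (-(2 * s)) * pd2 α x) q
        + pd2 (fun x => x.2 ^ (-(2 * s)) * pd2 α x) q) =
      ((-(ℓ - s) * (ℓ + s + 1) : ℤ) : ℝ) * q.2 ^ (-2 - 2 * s) * α q

/-- The operator `r²∂_r`. -/
def r2dr (f : ℝ × ℝ → ℝ) : ℝ × ℝ → ℝ := fun q => q.2 ^ 2 * pd2 f q

/-! ### Auxiliary lemmas -/

lemma zfactR_pos (n : ℤ) : 0 < zfactR n := by
  unfold zfactR; exact_mod_cast Nat.factorial_pos n.toNat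

lemma zfactR_ne (n : ℤ) : zfactR n ≠ 0 := (zfactR_pos n).ne'

lemma zfactR_succ (m : ℤ) (h : 0 ≤ m) : zfactR (m + 1) = (m + 1) * zfactR m := by
  unfold zfactR
  have h1 : (m + 1).toNat = m.toNat + 1 := by omega
  rw [h1, Nat.factorial_succ]
  have : ((m.toNat : ℤ) : ℝ) = (m : ℝ) := by rw [Int.toNat_of_nonneg h]
  push_cast at this ⊢
  rw [this]

lemma invZfact_of_nonneg (m : ℤ) (h : 0 ≤ m) : invZfact m = (zfactR m)⁻¹ := by
  simp [invZfact, zfactR, h]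

lemma invZfact_pred (m : ℤ) : invZfact (m - 1) = m * invZfact m := by
  rcases lt_trichotomy m 0 with h | h | h
  · rw [invZfact, invZfact, if_neg (by omega), if_neg (by omega), mul_zero]
  · subst h; rw [invZfact, if_neg (by omega)]; ring
  · rw [invZfact_of_nonneg _ (by omega), invZfact_of_nonneg _ (by omega)]
    have h1 : zfactR m = m * zfactR (m - 1) := by
      have h2 := zfactR_succ (m - 1) (by omega)
      rw [sub_add_cancel] at h2
      rw [h2]; push_cast; ring
    have hm : (m : ℝ) ≠ 0 := by exact_mod_cast h.ne'
    rw [h1, mul_inv, ← mul_assoc, mul_inv_cancel₀ hm, one_mul]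

lemma pd1_monoSum (m : ℕ) (c : ℕ → ℝ) (e f : ℕ → ℤ) (q : ℝ × ℝ) (hq : q.1 ≠ 0) :
    pd1 (fun x => ∑ n ∈ Finset.range m, c n * x.1 ^ (e n) * x.2 ^ (f n)) q
      = ∑ n ∈ Finset.range m, c n * (e n) * q.1 ^ (e n - 1) * q.2 ^ (f n) := by
  have h : HasDerivAt (fun x : ℝ => ∑ n ∈ Finset.range m, c n * x ^ (e n) * q.2 ^ (f n))
      (∑ n ∈ Finset.range m, c n * (e n) * q.1 ^ (e n - 1) * q.2 ^ (f n)) q.1 := by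
    apply HasDerivAt.fun_sum
    intro n _
    have h := hasDerivAt_zpow (e n) q.1 (Or.inl hq)
    have h2 := (h.const_mul (c n)).mul_const (q.2 ^ (f n))
    convert h2 using 1
    · rfl
    ring
  exact h.deriv

lemma pd2_monoSum (m : ℕ) (c : ℕ → ℝ) (e f : ℕ → ℤ) (q : ℝ × ℝ) (hq : q.2 ≠ 0) :
    pd2 (fun x => ∑ n ∈ Finset.range m, c n * x.1 ^ (e n) * x.2 ^ (f n)) q
      = ∑ n ∈ Finset.range m, c n * q.1 ^ (e n) * (f n) * q.2 ^ (f n - 1) := by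
  have h : HasDerivAt (fun y : ℝ => ∑ n ∈ Finset.range m, c n * q.1 ^ (e n) * y ^ (f n))
      (∑ n ∈ Finset.range m, c n * q.1 ^ (e n) * (f n) * q.2 ^ (f n - 1)) q.2 := by
    apply HasDerivAt.fun_sum
    intro n _
    have h := hasDerivAt_zpow (f n) q.2 (Or.inl hq)
    have h2 := h.const_mul (c n * q.1 ^ (e n))
    convert h2 using 1
    · rfl
    ring
  exact h.deriv

lemma prod_range_sub_self (N : ℕ) :
    ∏ j ∈ Finset.range N, ((j : ℝ) - N) = (-1) ^ N * N.factorial := by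
  have h1 : ∏ j ∈ Finset.range N, ((j : ℝ) - N) =
      ∏ j ∈ Finset.range N, (-1) * ((N - j : ℕ) : ℝ) := by
    apply Finset.prod_congr rfl
    intro j hj
    have hj' : j < N := Finset.mem_range.mp hj
    have : ((N - j : ℕ) : ℝ) = (N : ℝ) - j := by
      push_cast [Nat.cast_sub hj'.le]; ring
    rw [this]; ring
  rw [h1, Finset.prod_mul_distrib, Finset.prod_const, Finset.card_range,
    ← Nat.cast_prod]
  congr 1
  congr 1
  have h2 := Finset.prod_range_reflect (fun j => j + 1) N
  rw [← Finset.prod_range_add_one_eq_factorial, ← h2]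
  apply Finset.prod_congr rfl
  intro j hj
  have : j < N := Finset.mem_range.mp hj
  omega

lemma mul_div_cancel_eq (X Y1 d1 Z Y2 d2 : ℝ) (h1 : d1 ≠ 0) (h2 : d2 ≠ 0)
    (h : X * Y1 * d2 = Z * Y2 * d1) : X * (Y1 / d1) = Z * (Y2 / d2) := by
  rw [mul_div_assoc', mul_div_assoc', div_eq_div_iff h1 h2]
  linear_combination h

lemma pd1_congr_nhds (f g : ℝ × ℝ → ℝ) (q : ℝ × ℝ) (hq : q.1 ≠ 0)
    (h : ∀ x : ℝ, x ≠ 0 → f (x, q.2) = g (x, q.2)) : pd1 f q = pd1 g q := by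
  apply Filter.EventuallyEq.deriv_eq
  filter_upwards [eventually_ne_nhds hq] with x hx using h x hx

lemma pd2_congr_nhds (f g : ℝ × ℝ → ℝ) (q : ℝ × ℝ) (hq : q.2 ≠ 0)
    (h : ∀ y : ℝ, y ≠ 0 → f (q.1, y) = g (q.1, y)) : pd2 f q = pd2 g q := by
  apply Filter.EventuallyEq.deriv_eq
  filter_upwards [eventually_ne_nhds hq] with y hy using h y hy

lemma alpha_eq (M : ℕ) (S : ℕ → ℝ) (a : ℤ) (q : ℝ × ℝ) (hq : q.1 ≠ 0) :
    q.1 ^ a * ∑ n ∈ Finset.range M, S n * (q.1 / q.2) ^ n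
      = ∑ n ∈ Finset.range M, S n * q.1 ^ (a + n) * q.2 ^ (-(n : ℤ)) := by
  rw [Finset.mul_sum]
  refine Finset.sum_congr rfl fun n _ => ?_
  rw [div_pow, div_eq_mul_inv, zpow_add₀ hq, zpow_natCast, zpow_neg, zpow_natCast]
  ring

lemma key_pd (s a : ℤ) (M : ℕ) (S : ℕ → ℝ) (α : ℝ × ℝ → ℝ)
    (hβ : ∀ q : ℝ × ℝ, q.1 ≠ 0 →
      α q = ∑ n ∈ Finset.range M, S n * q.1 ^ (a + n) * q.2 ^ (-(n : ℤ)))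
    (q : ℝ × ℝ) (h1 : q.1 ≠ 0) (h2 : q.2 ≠ 0) :
    pd1 (fun x => x.2 ^ (-(2 * s)) * pd2 α x) q
      = ∑ n ∈ Finset.range M,
          (S n * (-(n : ℤ))) * ((a + (n : ℤ) : ℤ) : ℝ) * q.1 ^ (a + (n : ℤ) - 1) *
            q.2 ^ (-(n : ℤ) - 1 - 2 * s)
    ∧ pd2 (fun x => x.2 ^ (-(2 * s)) * pd2 α x) q
      = ∑ n ∈ Finset.range M,
          (S n * (-(n : ℤ))) * q.1 ^ (a + (n : ℤ)) * ((-(n : ℤ) - 1 - 2 * s : ℤ) : ℝ) *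
            q.2 ^ (-(n : ℤ) - 1 - 2 * s - 1) := by
  have hG : ∀ x : ℝ × ℝ, x.1 ≠ 0 → x.2 ≠ 0 →
      x.2 ^ (-(2 * s)) * pd2 α x
        = ∑ n ∈ Finset.range M,
            (S n * (-(n : ℤ))) * x.1 ^ (a + (n : ℤ)) * x.2 ^ (-(n : ℤ) - 1 - 2 * s) := by
    intro x hx1 hx2
    have hp2 : pd2 α x = pd2
        (fun y : ℝ × ℝ => ∑ n ∈ Finset.range M, S n * y.1 ^ (a + n) * y.2 ^ (-(n : ℤ))) x := by
      unfold pd2; congr 1; funext y; exact hβ (x.1, y) hx1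
    rw [hp2, pd2_monoSum M (fun n => S n) (fun n => a + n) (fun n => -(n : ℤ)) x hx2,
      Finset.mul_sum]
    refine Finset.sum_congr rfl fun n _ => ?_
    have he : x.2 ^ (-(n : ℤ) - 1 - 2 * s) = x.2 ^ (-(2 * s)) * x.2 ^ (-(n : ℤ) - 1) := by
      rw [← zpow_add₀ hx2]; congr 1; ring
    rw [he]
    push_cast
    ring
  constructor
  · rw [pd1_congr_nhds _ (fun x => ∑ n ∈ Finset.range M,
        (S n * (-(n : ℤ))) * x.1 ^ (a + (n : ℤ)) * x.2 ^ (-(n : ℤ) - 1 - 2 * s)) q h1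
        (fun x hx => hG (x, q.2) hx h2),
      pd1_monoSum M (fun n => S n * (-(n : ℤ))) (fun n => a + (n : ℤ))
        (fun n => -(n : ℤ) - 1 - 2 * s) q h1]
  · rw [pd2_congr_nhds _ (fun x => ∑ n ∈ Finset.range M,
        (S n * (-(n : ℤ))) * x.1 ^ (a + (n : ℤ)) * x.2 ^ (-(n : ℤ) - 1 - 2 * s)) q h2
        (fun y hy => hG (q.1, y) h1 hy),
      pd2_monoSum M (fun n => S n * (-(n : ℤ))) (fun n => a + (n : ℤ))
        (fun n => -(n : ℤ) - 1 - 2 * s) q h2]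

lemma sum_rearrange (s ℓ a : ℤ) (N : ℕ) (hN : (N : ℤ) = ℓ - s) (S : ℕ → ℝ)
    (q : ℝ × ℝ) (h2 : q.2 ≠ 0) :
    -((∑ n ∈ Finset.range (N + 1),
          (S n * (-(n : ℤ))) * ((a + (n : ℤ) : ℤ) : ℝ) * q.1 ^ (a + (n : ℤ) - 1) *
            q.2 ^ (-(n : ℤ) - 1 - 2 * s))
        + ∑ n ∈ Finset.range (N + 1),
            (S n * (-(n : ℤ))) * q.1 ^ (a + (n : ℤ)) * ((-(n : ℤ) - 1 - 2 * s : ℤ) : ℝ) *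
              q.2 ^ (-(n : ℤ) - 1 - 2 * s - 1))
      - ((-(ℓ - s) * (ℓ + s + 1) : ℤ) : ℝ) * q.2 ^ (-2 - 2 * s) *
          (∑ n ∈ Finset.range (N + 1), S n * q.1 ^ (a + n) * q.2 ^ (-(n : ℤ)))
    = ∑ n ∈ Finset.range N,
        ((((n : ℝ) + 1) * ((a : ℝ) + (n : ℝ) + 1) * S (n + 1)
            + ((ℓ : ℝ) - (s : ℝ) - (n : ℝ)) * ((ℓ : ℝ) + (s : ℝ) + (n : ℝ) + 1) * S n)
          * (q.1 ^ (a + (n : ℤ)) * q.2 ^ (-(n : ℤ) - 2 - 2 * s))) := by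
  have hA : ∀ n : ℕ, (S n * (n : ℝ) * ((a : ℝ) + n)) *
      (q.1 ^ (a + (n : ℤ) - 1) * q.2 ^ (-(n : ℤ) - 1 - 2 * s)) = 0 ∨ True := fun n => Or.inr trivial
  set A : ℕ → ℝ := fun n => (S n * (n : ℝ) * ((a : ℝ) + n)) *
      (q.1 ^ (a + (n : ℤ) - 1) * q.2 ^ (-(n : ℤ) - 1 - 2 * s)) with hAdef
  set B : ℕ → ℝ := fun n => (S n * (((ℓ : ℝ) - s - n) * ((ℓ : ℝ) + s + n + 1))) *
      (q.1 ^ (a + (n : ℤ)) * q.2 ^ (-(n : ℤ) - 2 - 2 * s)) with hBdef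
  have hsplit : -((∑ n ∈ Finset.range (N + 1),
          (S n * (-(n : ℤ))) * ((a + (n : ℤ) : ℤ) : ℝ) * q.1 ^ (a + (n : ℤ) - 1) *
            q.2 ^ (-(n : ℤ) - 1 - 2 * s))
        + ∑ n ∈ Finset.range (N + 1),
            (S n * (-(n : ℤ))) * q.1 ^ (a + (n : ℤ)) * ((-(n : ℤ) - 1 - 2 * s : ℤ) : ℝ) *
              q.2 ^ (-(n : ℤ) - 1 - 2 * s - 1))
      - ((-(ℓ - s) * (ℓ + s + 1) : ℤ) : ℝ) * q.2 ^ (-2 - 2 * s) *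
          (∑ n ∈ Finset.range (N + 1), S n * q.1 ^ (a + n) * q.2 ^ (-(n : ℤ)))
      = ∑ n ∈ Finset.range (N + 1), (A n + B n) := by
    rw [Finset.mul_sum, neg_add, sub_eq_add_neg, ← Finset.sum_neg_distrib,
      ← Finset.sum_neg_distrib, ← Finset.sum_neg_distrib, ← Finset.sum_add_distrib,
      ← Finset.sum_add_distrib]
    refine Finset.sum_congr rfl fun n _ => ?_
    have he1 : (-(n : ℤ) - 1 - 2 * s - 1) = (-(n : ℤ) - 2 - 2 * s) := by ring
    have he2 : q.2 ^ (-(n : ℤ) - 2 - 2 * s) = q.2 ^ (-2 - 2 * s) * q.2 ^ (-(n : ℤ)) := by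
      rw [← zpow_add₀ h2]; congr 1; ring
    rw [he1, hAdef, hBdef]
    simp only []
    rw [he2]
    push_cast
    ring
  rw [hsplit, Finset.sum_add_distrib, Finset.sum_range_succ' A, Finset.sum_range_succ B]
  have hA0 : A 0 = 0 := by simp [hAdef]
  have hBN : B N = 0 := by
    have hz : (ℓ : ℝ) - (s : ℝ) - (N : ℝ) = 0 := by
      have : ((N : ℤ) : ℝ) = ((ℓ - s : ℤ) : ℝ) := by rw [hN]
      push_cast at this
      linarith
    simp [hBdef, hz]
  rw [hA0, hBN, add_zero, add_zero, ← Finset.sum_add_distrib]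
  refine Finset.sum_congr rfl fun n _ => ?_
  rw [hAdef, hBdef]
  simp only []
  have he3 : a + ((n + 1 : ℕ) : ℤ) - 1 = a + (n : ℤ) := by push_cast; ring
  have he4 : (-(((n + 1 : ℕ) : ℤ)) - 1 - 2 * s) = (-(n : ℤ) - 2 - 2 * s) := by push_cast; ring
  rw [he3, he4]
  push_cast
  ring

lemma poly_coeffs (N : ℕ) (c : ℕ → ℝ)
    (h : ∀ x : ℝ, 0 < x → x < 1 → ∑ n ∈ Finset.range N, c n * x ^ n = 0) :
    ∀ n < N, c n = 0 := by
  set P : Polynomial ℝ := ∑ n ∈ Finset.range N, Polynomial.C (c n) * Polynomial.X ^ n with hP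
  have hev : ∀ x : ℝ, P.eval x = ∑ n ∈ Finset.range N, c n * x ^ n := by
    intro x
    rw [hP, Polynomial.eval_finset_sum]
    simp
  have hP0 : P = 0 := by
    apply Polynomial.eq_zero_of_infinite_isRoot
    apply Set.Infinite.mono (s := Set.Ioo (0 : ℝ) 1)
    · intro x hx
      simp only [Set.mem_setOf_eq, Polynomial.IsRoot, hev]
      exact h x hx.1 hx.2
    · exact Set.Ioo_infinite (show (0:ℝ) < 1 by norm_num)
  intro n hn
  have := congrArg (fun p => Polynomial.coeff p n) hP0
  simp only [Polynomial.coeff_zero, hP, Polynomial.finset_sum_coeff,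
    Polynomial.coeff_C_mul, Polynomial.coeff_X_pow] at this
  rw [Finset.sum_eq_single n] at this
  · simpa using this
  · intro b _ hb
    simp [Ne.symm hb]
  · intro hnn
    exact absurd (Finset.mem_range.mpr hn) hnn

/-- Proposition 13.1: the power-law ansatz `α = r₀^(s−p) Σ_{n=0}^{ℓ−s} Sₙ (r₀/r)^n` solves
the flat fixed-mode spin-`s` Teukolsky equation iff the coefficients take the stated
closed form; moreover `(r²∂_r)^(ℓ−s) α = (−1)^(ℓ−s) (ℓ−s)! S_{ℓ−s} r₀^(ℓ−p)` for any
coefficients. -/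
theorem flat_teukolsky_power_ansatz
    (s ℓ : ℤ) (hsl : |s| ≤ ℓ) (p : ℕ) (hp : (p : ℤ) ≤ ℓ) (S : ℕ → ℝ)
    (α : ℝ × ℝ → ℝ)
    (hα : α = fun q =>
      q.1 ^ (s - (p : ℤ)) * ∑ n ∈ Finset.range ((ℓ - s).toNat + 1), S n * (q.1 / q.2) ^ n) :
    (FlatTeuk s ℓ α ↔
        ∀ n : ℕ, n ≤ (ℓ - s).toNat →
          S n = S (ℓ - s).toNat *
            ((-1 : ℝ) ^ (ℓ - s + (n : ℤ)) * zfactR (ℓ - s) * zfactR (ℓ - (p : ℤ)) /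
              zfactR (2 * ℓ)) *
            (zfactR (ℓ + s + (n : ℤ)) * invZfact (s - (p : ℤ) + (n : ℤ)) /
              (zfactR (n : ℤ) * zfactR (ℓ - s - (n : ℤ))))) ∧
      ∀ q ∈ OmegaSet,
        (r2dr^[(ℓ - s).toNat] α) q =
          (-1 : ℝ) ^ (ℓ - s) * zfactR (ℓ - s) * S (ℓ - s).toNat * q.1 ^ (ℓ - (p : ℤ)) := by
  have hsle : s ≤ ℓ := le_of_abs_le hsl
  have hls : 0 ≤ ℓ + s := by
    have h := neg_abs_le s
    omega
  set N := (ℓ - s).toNat with hNdef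
  have hN : (N : ℤ) = ℓ - s := Int.toNat_of_nonneg (by omega)
  set a : ℤ := s - (p : ℤ) with hadef
  have hβ : ∀ q : ℝ × ℝ, q.1 ≠ 0 →
      α q = ∑ n ∈ Finset.range (N + 1), S n * q.1 ^ (a + n) * q.2 ^ (-(n : ℤ)) := by
    intro q hq
    rw [hα]
    exact alpha_eq (N + 1) S a q hq
  set Φ : ℕ → ℝ := fun n =>
      ((-1 : ℝ) ^ (N + n) * zfactR (ℓ - s) * zfactR (ℓ - (p : ℤ)) / zfactR (2 * ℓ)) *
        (zfactR (ℓ + s + (n : ℤ)) * invZfact (a + (n : ℤ)) /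
          (zfactR ((n : ℕ) : ℤ) * zfactR (ℓ - s - (n : ℤ)))) with hΦdef
  have hsgn : ∀ n : ℕ, (-1 : ℝ) ^ (ℓ - s + (n : ℤ)) = (-1 : ℝ) ^ (N + n) := by
    intro n
    rw [← hN, show (N : ℤ) + (n : ℤ) = ((N + n : ℕ) : ℤ) by push_cast; ring, zpow_natCast]
  have hform : ∀ n : ℕ,
      S N * ((-1 : ℝ) ^ (ℓ - s + (n : ℤ)) * zfactR (ℓ - s) * zfactR (ℓ - (p : ℤ)) /
          zfactR (2 * ℓ)) *
        (zfactR (ℓ + s + (n : ℤ)) * invZfact (a + (n : ℤ)) /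
          (zfactR ((n : ℕ) : ℤ) * zfactR (ℓ - s - (n : ℤ)))) = S N * Φ n := by
    intro n
    rw [hΦdef]
    simp only []
    rw [hsgn n]
    ring
  have hΦN : Φ N = 1 := by
    rw [hΦdef]
    simp only []
    have e1 : ℓ + s + (N : ℤ) = 2 * ℓ := by omega
    have e2 : a + (N : ℤ) = ℓ - (p : ℤ) := by omega
    have e3 : ℓ - s - (N : ℤ) = 0 := by omega
    have e4 : zfactR ((N : ℕ) : ℤ) = zfactR (ℓ - s) := by rw [hN]
    have h0 : zfactR 0 = 1 := by simp [zfactR]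
    rw [e1, e2, e3, e4, h0, invZfact_of_nonneg _ (by omega)]
    have h5 : (-1 : ℝ) ^ (N + N) = 1 := by
      rw [show N + N = 2 * N by ring, pow_mul]; norm_num
    rw [h5]
    field_simp
    rw [show zfactR (ℓ - s) * zfactR (ℓ - (p:ℤ)) * zfactR (2 * ℓ)
        = zfactR (2 * ℓ) * (zfactR (ℓ - (p:ℤ)) * zfactR (ℓ - s)) by ring]
    exact div_self (mul_ne_zero (zfactR_ne _) (mul_ne_zero (zfactR_ne _) (zfactR_ne _)))
  have hd1 : ∀ n : ℕ, n < N → ((ℓ : ℝ) - (s : ℝ) - (n : ℝ)) ≠ 0 := by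
    intro n hn
    have h' : (n : ℤ) < ℓ - s := by omega
    have h'' : ((n : ℤ) : ℝ) < ((ℓ - s : ℤ) : ℝ) := by exact_mod_cast h'
    push_cast at h''
    linarith
  have hd2 : ∀ n : ℕ, ((ℓ : ℝ) + (s : ℝ) + (n : ℝ) + 1) ≠ 0 := by
    intro n
    have h' : (0 : ℤ) < ℓ + s + n + 1 := by omega
    have h'' : ((0 : ℤ) : ℝ) < ((ℓ + s + (n : ℤ) + 1 : ℤ) : ℝ) := by exact_mod_cast h'
    push_cast at h''
    linarith
  have hid : ∀ n : ℕ, n < N →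
      ((n : ℝ) + 1) * ((a : ℝ) + (n : ℝ) + 1) * Φ (n + 1)
        + ((ℓ : ℝ) - (s : ℝ) - (n : ℝ)) * ((ℓ : ℝ) + (s : ℝ) + (n : ℝ) + 1) * Φ n = 0 := by
    intro n hn
    have hfa : zfactR (ℓ + s + ((n + 1 : ℕ) : ℤ)) =
        ((ℓ : ℝ) + (s : ℝ) + (n : ℝ) + 1) * zfactR (ℓ + s + (n : ℤ)) := by
      have h' := zfactR_succ (ℓ + s + (n : ℤ)) (by omega)
      rw [show ℓ + s + ((n + 1 : ℕ) : ℤ) = ℓ + s + (n : ℤ) + 1 by push_cast; ring, h']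
      push_cast
      ring
    have hfn : zfactR (((n + 1 : ℕ)) : ℤ) = ((n : ℝ) + 1) * zfactR ((n : ℕ) : ℤ) := by
      have h' := zfactR_succ ((n : ℕ) : ℤ) (by omega)
      rw [show (((n + 1 : ℕ)) : ℤ) = ((n : ℕ) : ℤ) + 1 by push_cast; ring, h']
      push_cast
      ring
    have hfd : zfactR (ℓ - s - (n : ℤ)) =
        ((ℓ : ℝ) - (s : ℝ) - (n : ℝ)) * zfactR (ℓ - s - ((n + 1 : ℕ) : ℤ)) := by
      have h' := zfactR_succ (ℓ - s - (n : ℤ) - 1) (by omega)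
      rw [show ℓ - s - (n : ℤ) - 1 + 1 = ℓ - s - (n : ℤ) by ring] at h'
      rw [h', show ℓ - s - ((n + 1 : ℕ) : ℤ) = ℓ - s - (n : ℤ) - 1 by push_cast; ring]
      push_cast
      ring
    have hfi : invZfact (a + (n : ℤ)) =
        ((a : ℝ) + (n : ℝ) + 1) * invZfact (a + ((n + 1 : ℕ) : ℤ)) := by
      have h' := invZfact_pred (a + (n : ℤ) + 1)
      rw [show a + (n : ℤ) + 1 - 1 = a + (n : ℤ) by ring] at h'
      rw [h', show a + ((n + 1 : ℕ) : ℤ) = a + (n : ℤ) + 1 by push_cast; ring]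
      push_cast
      ring
    have hs1 : (-1 : ℝ) ^ (N + (n + 1)) = -(-1 : ℝ) ^ (N + n) := by
      rw [show N + (n + 1) = (N + n) + 1 by ring, pow_succ]
      ring
    have hne1 := hd1 n hn
    have hne2 : ((n : ℝ) + 1) ≠ 0 := by positivity
    rw [hΦdef]
    simp only []
    rw [hs1]
    have hT : ((n : ℝ) + 1) * ((a : ℝ) + (n : ℝ) + 1) *
        (zfactR (ℓ + s + ((n + 1 : ℕ) : ℤ)) * invZfact (a + ((n + 1 : ℕ) : ℤ)) /
          (zfactR (((n + 1 : ℕ)) : ℤ) * zfactR (ℓ - s - ((n + 1 : ℕ) : ℤ))))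
        = (((ℓ : ℝ) - (s : ℝ) - (n : ℝ)) * ((ℓ : ℝ) + (s : ℝ) + (n : ℝ) + 1)) *
            (zfactR (ℓ + s + (n : ℤ)) * invZfact (a + (n : ℤ)) /
              (zfactR ((n : ℕ) : ℤ) * zfactR (ℓ - s - (n : ℤ)))) := by
      apply mul_div_cancel_eq _ _ _ _ _ _
        (mul_ne_zero (zfactR_ne _) (zfactR_ne _)) (mul_ne_zero (zfactR_ne _) (zfactR_ne _))
      rw [hfa, hfn, hfd, hfi]
      ring
    linear_combination
      (-(-1 : ℝ) ^ (N + n) * zfactR (ℓ - s) * zfactR (ℓ - (p : ℤ)) / zfactR (2 * ℓ)) * hT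
  have hforward : (∀ n : ℕ, n < N →
      ((n : ℝ) + 1) * ((a : ℝ) + (n : ℝ) + 1) * S (n + 1)
        + ((ℓ : ℝ) - (s : ℝ) - (n : ℝ)) * ((ℓ : ℝ) + (s : ℝ) + (n : ℝ) + 1) * S n = 0) →
      ∀ n : ℕ, n ≤ N → S n = S N * Φ n := by
    intro hc
    have step : ∀ j : ℕ, ∀ n : ℕ, n + j = N → S n = S N * Φ n := by
      intro j
      induction j with
      | zero =>
        intro n hn
        have hn' : n = N := by omega
        subst hn'
        rw [hΦN, mul_one]
      | succ j ih =>
        intro n hn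
        have h1 : n < N := by omega
        have h2 : S (n + 1) = S N * Φ (n + 1) := ih (n + 1) (by omega)
        have h3 := hc n h1
        have hidn := hid n h1
        have key : ((ℓ : ℝ) - (s : ℝ) - (n : ℝ)) * (((ℓ : ℝ) + (s : ℝ) + (n : ℝ) + 1) * S n)
            = ((ℓ : ℝ) - (s : ℝ) - (n : ℝ)) *
                (((ℓ : ℝ) + (s : ℝ) + (n : ℝ) + 1) * (S N * Φ n)) := by
          linear_combination h3 - ((n : ℝ) + 1) * ((a : ℝ) + (n : ℝ) + 1) * h2 - S N * hidn
        exact mul_left_cancel₀ (hd2 n) (mul_left_cancel₀ (hd1 n h1) key)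
    intro n hn
    exact step (N - n) n (by omega)
  have hbackward : (∀ n : ℕ, n ≤ N → S n = S N * Φ n) → ∀ n : ℕ, n < N →
      ((n : ℝ) + 1) * ((a : ℝ) + (n : ℝ) + 1) * S (n + 1)
        + ((ℓ : ℝ) - (s : ℝ) - (n : ℝ)) * ((ℓ : ℝ) + (s : ℝ) + (n : ℝ) + 1) * S n = 0 := by
    intro hF n hn
    rw [hF n (by omega), hF (n + 1) (by omega)]
    linear_combination S N * hid n hn
  have hflat_iff : FlatTeuk s ℓ α ↔ ∀ q ∈ OmegaSet,
      (∑ n ∈ Finset.range N,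
        ((((n : ℝ) + 1) * ((a : ℝ) + (n : ℝ) + 1) * S (n + 1)
            + ((ℓ : ℝ) - (s : ℝ) - (n : ℝ)) * ((ℓ : ℝ) + (s : ℝ) + (n : ℝ) + 1) * S n)
          * (q.1 ^ (a + (n : ℤ)) * q.2 ^ (-(n : ℤ) - 2 - 2 * s)))) = 0 := by
    unfold FlatTeuk
    refine forall₂_congr fun q hq => ?_
    have hq1 : (0 : ℝ) < q.1 := hq.1
    have h1 : q.1 ≠ 0 := ne_of_gt hq1
    have h2 : q.2 ≠ 0 := ne_of_gt (lt_trans hq1 hq.2)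
    obtain ⟨e1, e2⟩ := key_pd s a (N + 1) S α hβ q h1 h2
    rw [e1, e2, hβ q h1, ← sum_rearrange s ℓ a N hN S q h2, ← sub_eq_zero]
  have hcond_iff : (∀ q ∈ OmegaSet,
      (∑ n ∈ Finset.range N,
        ((((n : ℝ) + 1) * ((a : ℝ) + (n : ℝ) + 1) * S (n + 1)
            + ((ℓ : ℝ) - (s : ℝ) - (n : ℝ)) * ((ℓ : ℝ) + (s : ℝ) + (n : ℝ) + 1) * S n)
          * (q.1 ^ (a + (n : ℤ)) * q.2 ^ (-(n : ℤ) - 2 - 2 * s)))) = 0) ↔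
      (∀ n : ℕ, n < N →
        ((n : ℝ) + 1) * ((a : ℝ) + (n : ℝ) + 1) * S (n + 1)
          + ((ℓ : ℝ) - (s : ℝ) - (n : ℝ)) * ((ℓ : ℝ) + (s : ℝ) + (n : ℝ) + 1) * S n = 0) := by
    constructor
    · intro h
      apply poly_coeffs
      intro x hx0 hx1
      have hxne : x ≠ 0 := ne_of_gt hx0
      have h' : ∑ n ∈ Finset.range N,
          ((((n : ℝ) + 1) * ((a : ℝ) + (n : ℝ) + 1) * S (n + 1)
              + ((ℓ : ℝ) - (s : ℝ) - (n : ℝ)) * ((ℓ : ℝ) + (s : ℝ) + (n : ℝ) + 1) * S n)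
            * (x ^ (a + (n : ℤ)) * (1 : ℝ) ^ (-(n : ℤ) - 2 - 2 * s))) = 0 :=
        h (x, 1) ⟨hx0, hx1⟩
      have h2' : x ^ a * (∑ n ∈ Finset.range N,
          (((n : ℝ) + 1) * ((a : ℝ) + (n : ℝ) + 1) * S (n + 1)
              + ((ℓ : ℝ) - (s : ℝ) - (n : ℝ)) * ((ℓ : ℝ) + (s : ℝ) + (n : ℝ) + 1) * S n)
            * x ^ n) = 0 := by
        rw [Finset.mul_sum, ← h']
        refine Finset.sum_congr rfl fun n _ => ?_
        rw [one_zpow, mul_one, zpow_add₀ hxne, zpow_natCast]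
        ring
      rcases mul_eq_zero.mp h2' with hcase | hcase
      · exact absurd hcase (zpow_ne_zero _ hxne)
      · exact hcase
    · intro h q _
      apply Finset.sum_eq_zero
      intro n hn
      rw [h n (Finset.mem_range.mp hn), zero_mul]
  have hiter : ∀ k : ℕ, ∀ q : ℝ × ℝ, q.1 ≠ 0 → q.2 ≠ 0 →
      (r2dr^[k] α) q = ∑ n ∈ Finset.range (N + 1),
        (S n * ∏ j ∈ Finset.range k, ((j : ℝ) - (n : ℝ))) * q.1 ^ (a + (n : ℤ)) *
          q.2 ^ ((k : ℤ) - (n : ℤ)) := by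
    intro k
    induction k with
    | zero =>
      intro q h1 h2
      simp only [Function.iterate_zero, id_eq, Finset.prod_range_zero, mul_one,
        Nat.cast_zero, zero_sub]
      exact hβ q h1
    | succ k ih =>
      intro q h1 h2
      rw [Function.iterate_succ_apply']
      show q.2 ^ 2 * pd2 (r2dr^[k] α) q = _
      rw [pd2_congr_nhds (r2dr^[k] α)
          (fun x => ∑ n ∈ Finset.range (N + 1),
            (S n * ∏ j ∈ Finset.range k, ((j : ℝ) - (n : ℝ))) * x.1 ^ (a + (n : ℤ)) *
              x.2 ^ ((k : ℤ) - (n : ℤ))) q h2 (fun y hy => ih (q.1, y) h1 hy),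
        pd2_monoSum (N + 1) _ _ _ q h2, Finset.mul_sum]
      refine Finset.sum_congr rfl fun n _ => ?_
      rw [Finset.prod_range_succ]
      have hq2 : q.2 ^ (2 : ℕ) * q.2 ^ ((k : ℤ) - (n : ℤ) - 1)
          = q.2 ^ (((k + 1 : ℕ) : ℤ) - (n : ℤ)) := by
        rw [← zpow_natCast q.2 2, ← zpow_add₀ h2]
        congr 1
        push_cast
        ring
      rw [← hq2]
      push_cast
      ring
  constructor
  · rw [hflat_iff, hcond_iff]
    constructor
    · intro h n hn
      rw [hform n]
      exact hforward h n hn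
    · intro h
      apply hbackward
      intro n hn
      rw [← hform n]
      exact h n hn
  · intro q hq
    have h1 : q.1 ≠ 0 := ne_of_gt hq.1
    have h2 : q.2 ≠ 0 := ne_of_gt (lt_trans hq.1 hq.2)
    rw [hiter N q h1 h2]
    rw [Finset.sum_eq_single N]
    · have e1 : a + (N : ℤ) = ℓ - (p : ℤ) := by omega
      have e2 : (N : ℤ) - (N : ℤ) = 0 := by ring
      rw [prod_range_sub_self, e1, e2, zpow_zero, mul_one]
      have e3 : (-1 : ℝ) ^ (ℓ - s) = (-1 : ℝ) ^ N := by rw [← hN, zpow_natCast]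
      have e4 : zfactR (ℓ - s) = (N.factorial : ℝ) := by
        rw [← hN]
        simp [zfactR]
      rw [e3, e4]
      ring
    · intro b hb hbN
      have hbN' : b < N := by
        have := Finset.mem_range.mp hb
        omega
      have hz : ∏ j ∈ Finset.range N, ((j : ℝ) - (b : ℝ)) = 0 :=
        Finset.prod_eq_zero (Finset.mem_range.mpr hbN') (sub_self _)
      rw [hz, mul_zero, zero_mul, zero_mul]
    · intro hN'
      exact absurd (Finset.mem_range.mpr (by omega)) hN'
end
end

section
/- Let p ∈ ℝ, let S₀, …, S_{ℓ−s} be real numbers, set S_{−1} := 0 and S_{ℓ−s+1} := 0, and define α(r₀, r) := r₀^(s−p) · Σ_{n=0}^{ℓ−s} S_n · (r₀/r)^n on Ω. Then, pointwise on Ω, g[α] = ( 2M / ( r² · r₀^(1+p−s) ) ) · Σ_{n=0}^{ℓ−s+1} T_n · (r₀/r)^n, where T_n := (n−ℓ+s)(n+ℓ+s+1)·S_n − (n+s)(n+2s)·S_{n−1}. (Proposition 13.3: the computation of the inhomogeneity of the first-order post-Minkowskian Teukolsky equation generated by a Minkowskian solution ansatz.) -/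
lemma aux_div_pow_eq (c : ℝ) (n : ℕ) {y : ℝ} (_hy : y ≠ 0) :
    (c / y) ^ n = c ^ n * y ^ (-(n : ℤ)) := by
  rw [zpow_neg, zpow_natCast, div_pow, div_eq_mul_inv]

lemma hasDerivAt_div_pow (c : ℝ) (n : ℕ) {y : ℝ} (hy : y ≠ 0) :
    HasDerivAt (fun y => (c / y) ^ n) (-(n : ℝ) / y * (c / y) ^ n) y := by
  have he : (fun y : ℝ => (c / y) ^ n) =ᶠ[nhds y] (fun y => c ^ n * y ^ (-(n : ℤ))) := by
    filter_upwards [eventually_ne_nhds hy] with z hz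
    exact aux_div_pow_eq c n hz
  have h2 := ((hasDerivAt_zpow (-(n : ℤ)) y (Or.inl hy)).const_mul
    (c ^ n)).congr_of_eventuallyEq he
  refine h2.congr_deriv ?_
  symm
  rw [aux_div_pow_eq c n hy, zpow_sub_one₀ hy]
  push_cast
  ring

lemma hasDerivAt_div_pow' (c : ℝ) (n : ℕ) {y : ℝ} (hy : y ≠ 0) :
    HasDerivAt (fun y => -(n : ℝ) / y * (c / y) ^ n)
      ((n : ℝ) * ((n : ℝ) + 1) / y ^ 2 * (c / y) ^ n) y := by
  have he : (fun y : ℝ => -(n : ℝ) / y * (c / y) ^ n) =ᶠ[nhds y]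
      (fun y => (-(n : ℝ) * c ^ n) * y ^ ((-(n : ℤ)) - 1)) := by
    filter_upwards [eventually_ne_nhds hy] with z hz
    rw [aux_div_pow_eq c n hz, zpow_sub_one₀ hz]
    ring
  have h2 := ((hasDerivAt_zpow ((-(n : ℤ)) - 1) y (Or.inl hy)).const_mul
    (-(n : ℝ) * c ^ n)).congr_of_eventuallyEq he
  refine h2.congr_deriv ?_
  symm
  rw [aux_div_pow_eq c n hy, zpow_sub_one₀ hy, zpow_sub_one₀ hy]
  push_cast
  field_simp
  ring


noncomputable section

/-- Proposition 13.3: the inhomogeneity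
`g[α] = (2MΛ/(r²r₀))α − (2M(1+s)(1+2s)/r³)α + (s+1)(2M/r²)∂_rα
        + (2s/r)(D₀−D)∂_rα − (D₀−D)∂_r²α`
of the first-order post-Minkowskian Teukolsky equation generated by the Minkowskian
solution ansatz `α = r₀^(s−p) Σ_{n=0}^{ℓ−s} Sₙ (r₀/r)^n` (with `S₋₁ = S_{ℓ−s+1} = 0`)
equals `(2M/(r²r₀^(1+p−s))) Σ_{n=0}^{ℓ−s+1} Tₙ (r₀/r)^n`, where
`Tₙ = (n−ℓ+s)(n+ℓ+s+1)Sₙ − (n+s)(n+2s)S_{n−1}`. -/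
theorem post_minkowskian_inhomogeneity
    (M : ℝ) (hM : 0 ≤ M) (s ℓ : ℤ) (hsl : |s| ≤ ℓ)
    (p : ℝ) (S : ℤ → ℝ)
    (hSneg : ∀ n : ℤ, n < 0 → S n = 0)
    (hStop : ∀ n : ℤ, ℓ - s < n → S n = 0)
    (α : ℝ × ℝ → ℝ)
    (hα : α = fun q =>
      q.1 ^ ((s : ℝ) - p) *
        ∑ n ∈ Finset.range ((ℓ - s).toNat + 1), S (n : ℤ) * (q.1 / q.2) ^ n) :
    ∀ q ∈ OmegaSet,
      2 * M * ((-(ℓ - s) * (ℓ + s + 1) : ℤ) : ℝ) / (q.2 ^ 2 * q.1) * α q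
          - 2 * M * (((1 + s) * (1 + 2 * s) : ℤ) : ℝ) / q.2 ^ 3 * α q
          + ((s : ℝ) + 1) * (2 * M / q.2 ^ 2) * pd2 α q
          + 2 * (s : ℝ) / q.2 * ((1 - 2 * M / q.1) - (1 - 2 * M / q.2)) * pd2 α q
          - ((1 - 2 * M / q.1) - (1 - 2 * M / q.2)) * pd2 (pd2 α) q =
        2 * M / (q.2 ^ 2 * q.1 ^ (1 + p - (s : ℝ))) *
          ∑ n ∈ Finset.range ((ℓ - s).toNat + 2),
            (((((n : ℤ) - ℓ + s) * ((n : ℤ) + ℓ + s + 1) : ℤ) : ℝ) * S (n : ℤ)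
                - ((((n : ℤ) + s) * ((n : ℤ) + 2 * s) : ℤ) : ℝ) * S ((n : ℤ) - 1)) *
            (q.1 / q.2) ^ n := by
  rintro ⟨r₀, r⟩ ⟨hr₀, hrr⟩
  dsimp only at hr₀ hrr ⊢
  have hr : 0 < r := hr₀.trans hrr
  have hrne : r ≠ 0 := hr.ne'
  have hr₀ne : r₀ ≠ 0 := hr₀.ne'
  set N := (ℓ - s).toNat with hNdef
  have hls : (0 : ℤ) ≤ ℓ - s := sub_nonneg.2 ((le_abs_self s).trans hsl)
  have hN : (N : ℤ) = ℓ - s := Int.toNat_of_nonneg hls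
  set X := r₀ ^ ((s : ℝ) - p) with hXdef
  have hXpos : 0 < X := Real.rpow_pos_of_pos hr₀ _
  -- first r-derivative
  have hpd2 : ∀ y : ℝ, y ≠ 0 → pd2 α (r₀, y) =
      X * ∑ n ∈ Finset.range (N + 1), S (n : ℤ) * (-(n : ℝ) / y * (r₀ / y) ^ n) := by
    intro y hy
    have h : HasDerivAt (fun y => α (r₀, y))
        (X * ∑ n ∈ Finset.range (N + 1), S (n : ℤ) * (-(n : ℝ) / y * (r₀ / y) ^ n)) y := by
      rw [hα]
      exact ((HasDerivAt.fun_sum fun n _ =>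
        (hasDerivAt_div_pow r₀ n hy).const_mul (S (n : ℤ))).const_mul X)
    exact h.deriv
  -- second r-derivative
  have hpd22 : pd2 (pd2 α) (r₀, r) =
      X * ∑ n ∈ Finset.range (N + 1),
        S (n : ℤ) * ((n : ℝ) * ((n : ℝ) + 1) / r ^ 2 * (r₀ / r) ^ n) := by
    have hev : (fun y => pd2 α (r₀, y)) =ᶠ[nhds r]
        (fun y => X * ∑ n ∈ Finset.range (N + 1),
          S (n : ℤ) * (-(n : ℝ) / y * (r₀ / y) ^ n)) := by
      filter_upwards [eventually_ne_nhds hrne] with z hz using hpd2 z hz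
    have h : HasDerivAt (fun y => X * ∑ n ∈ Finset.range (N + 1),
        S (n : ℤ) * (-(n : ℝ) / y * (r₀ / y) ^ n))
        (X * ∑ n ∈ Finset.range (N + 1),
          S (n : ℤ) * ((n : ℝ) * ((n : ℝ) + 1) / r ^ 2 * (r₀ / r) ^ n)) r :=
      (HasDerivAt.fun_sum fun n _ =>
        (hasDerivAt_div_pow' r₀ n hrne).const_mul (S (n : ℤ))).const_mul X
    show deriv (fun y => pd2 α (r₀, y)) r = _
    rw [hev.deriv_eq]
    exact h.deriv
  have hαq : α (r₀, r) = X * ∑ n ∈ Finset.range (N + 1), S (n : ℤ) * (r₀ / r) ^ n := by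
    rw [hα]
  -- constant in front of RHS
  have h1 : r₀ ^ (1 + p - (s : ℝ)) * X = r₀ := by
    rw [hXdef, ← Real.rpow_add hr₀]
    have : 1 + p - (s : ℝ) + ((s : ℝ) - p) = 1 := by ring
    rw [this, Real.rpow_one]
  have hApos : 0 < r₀ ^ (1 + p - (s : ℝ)) := Real.rpow_pos_of_pos hr₀ _
  have hK : 2 * M / (r ^ 2 * r₀ ^ (1 + p - (s : ℝ))) = 2 * M * X / (r ^ 2 * r₀) := by
    rw [div_eq_div_iff (by positivity) (by positivity)]
    calc 2 * M * (r ^ 2 * r₀) = 2 * M * (r ^ 2 * (r₀ ^ (1 + p - (s : ℝ)) * X)) := by rw [h1]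
    _ = 2 * M * X * (r ^ 2 * r₀ ^ (1 + p - (s : ℝ))) := by ring
  -- reindex the RHS sum
  have hT : ∑ n ∈ Finset.range (N + 2),
      (((((n : ℤ) - ℓ + s) * ((n : ℤ) + ℓ + s + 1) : ℤ) : ℝ) * S (n : ℤ)
          - ((((n : ℤ) + s) * ((n : ℤ) + 2 * s) : ℤ) : ℝ) * S ((n : ℤ) - 1)) *
        (r₀ / r) ^ n
      = ∑ n ∈ Finset.range (N + 1),
          ((((((n : ℤ) - ℓ + s) * ((n : ℤ) + ℓ + s + 1) : ℤ) : ℝ) * S (n : ℤ)) * (r₀ / r) ^ n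
            - (((((n : ℤ) + 1 + s) * ((n : ℤ) + 1 + 2 * s) : ℤ) : ℝ) * S (n : ℤ))
              * (r₀ / r) ^ (n + 1)) := by
    rw [Finset.sum_sub_distrib]
    simp only [sub_mul]
    rw [Finset.sum_sub_distrib]
    congr 1
    · rw [Finset.sum_range_succ]
      have hS0 : S ((N : ℤ) + 1) = 0 := hStop _ (by omega)
      push_cast
      rw [hS0]
      ring
    · rw [Finset.sum_range_succ']
      have hSm : S ((0 : ℕ) - 1 : ℤ) = 0 := hSneg _ (by norm_num)
      rw [Nat.cast_zero] at hSm ⊢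
      simp only [hSm, mul_zero, zero_mul, pow_zero, mul_one, add_zero]
      refine Finset.sum_congr rfl fun n _ => ?_
      push_cast
      ring_nf
  -- rewrite goal
  rw [hpd22, hpd2 r hrne, hαq, hK, hT]
  rw [mul_comm (2 * M * X / (r ^ 2 * r₀))]
  rw [Finset.sum_mul]
  simp only [Finset.mul_sum, ← Finset.sum_sub_distrib, ← Finset.sum_add_distrib]
  refine Finset.sum_congr rfl fun n _ => ?_
  push_cast
  rw [pow_succ (r₀ / r) n]
  generalize (r₀ / r) ^ n = t
  field_simp
  ring
end
end

section
/- For every integer ℓ ≥ 2 one has (−1)^ℓ · Σ_{n=0}^{ℓ−2} [ (−1)^n / (n+2) ] · ( (ℓ+2+n)! / ( n! · (n+2)! · (ℓ−2−n)! ) ) = −1 + (−1)^ℓ + ℓ(ℓ+1). (This is identity (14.8), used in the computation of the limit of r²χ̂ at future null infinity.) -/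
open Finset

lemma key_alt_sum : ∀ (ℓ : ℕ), ∀ (a b : ℕ), ℓ ≤ b →
    ∑ m ∈ range (ℓ+1), (-1:ℚ)^m * (ℓ.choose m : ℚ) * ((a+m).choose b : ℚ)
      = (-1:ℚ)^ℓ * (a.choose (b-ℓ) : ℚ) := by
  intro ℓ
  induction ℓ with
  | zero => intro a b _; simp
  | succ ℓ ih =>
    intro a b hb
    have hb' : ℓ ≤ b := le_trans (Nat.le_succ ℓ) hb
    have hpeel : ∑ m ∈ range (ℓ+2), (-1:ℚ)^m * ((ℓ+1).choose m : ℚ) * ((a+m).choose b : ℚ)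
        = (∑ m ∈ range (ℓ+1), (-1:ℚ)^(m+1) * ((ℓ+1).choose (m+1) : ℚ) * ((a+(m+1)).choose b : ℚ))
          + (-1:ℚ)^0 * ((ℓ+1).choose 0 : ℚ) * ((a+0).choose b : ℚ) :=
      Finset.sum_range_succ' _ _
    have hsplit : ∀ m : ℕ, (-1:ℚ)^(m+1) * ((ℓ+1).choose (m+1) : ℚ) * ((a+(m+1)).choose b : ℚ)
        = -((-1:ℚ)^m * (ℓ.choose m : ℚ) * (((a+1)+m).choose b : ℚ))
          + (-1:ℚ)^(m+1) * (ℓ.choose (m+1) : ℚ) * ((a+(m+1)).choose b : ℚ) := by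
      intro m
      have : ((ℓ+1).choose (m+1) : ℚ) = (ℓ.choose m : ℚ) + (ℓ.choose (m+1) : ℚ) := by
        rw [Nat.choose_succ_succ]; push_cast; ring
      rw [this]
      have : (a+(m+1)) = (a+1)+m := by ring
      rw [this]; ring
    have hT : ∑ m ∈ range (ℓ+1), (-1:ℚ)^(m+1) * (ℓ.choose (m+1) : ℚ) * ((a+(m+1)).choose b : ℚ)
        = (-1:ℚ)^ℓ * (a.choose (b-ℓ) : ℚ) - (a.choose b : ℚ) := by
      have h2 : ∑ m ∈ range (ℓ+2), (-1:ℚ)^m * (ℓ.choose m : ℚ) * ((a+m).choose b : ℚ)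
          = (∑ m ∈ range (ℓ+1), (-1:ℚ)^(m+1) * (ℓ.choose (m+1) : ℚ) * ((a+(m+1)).choose b : ℚ))
            + (-1:ℚ)^0 * (ℓ.choose 0 : ℚ) * ((a+0).choose b : ℚ) :=
        Finset.sum_range_succ' _ _
      have h3 : ∑ m ∈ range (ℓ+2), (-1:ℚ)^m * (ℓ.choose m : ℚ) * ((a+m).choose b : ℚ)
          = (∑ m ∈ range (ℓ+1), (-1:ℚ)^m * (ℓ.choose m : ℚ) * ((a+m).choose b : ℚ))
            + (-1:ℚ)^(ℓ+1) * (ℓ.choose (ℓ+1) : ℚ) * ((a+(ℓ+1)).choose b : ℚ) :=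
        Finset.sum_range_succ _ _
      rw [ih a b hb'] at h3
      rw [Nat.choose_succ_self] at h3
      simp at h2 h3
      linarith [h2, h3]
    rw [hpeel, Finset.sum_congr rfl (fun m _ => hsplit m), Finset.sum_add_distrib, hT]
    rw [Finset.sum_neg_distrib]
    rw [ih (a+1) b hb']
    have hkey : ((a+1).choose (b-ℓ) : ℚ) = (a.choose (b-(ℓ+1)) : ℚ) + (a.choose (b-ℓ) : ℚ) := by
      have hb1 : b - ℓ = (b - (ℓ+1)) + 1 := by omega
      rw [hb1, Nat.choose_succ_succ]
      push_cast; ring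
    rw [hkey]
    simp [pow_succ]
    ring

/-- Identity (14.8), used in the computation of the limit of `r²χ̂` at future null
infinity: for every integer `ℓ ≥ 2`,
`(−1)^ℓ · Σ_{n=0}^{ℓ−2} (−1)^n/(n+2) · (ℓ+2+n)!/(n!·(n+2)!·(ℓ−2−n)!) = −1 + (−1)^ℓ + ℓ(ℓ+1)`. -/
theorem chihat_limit_sum_identity (ℓ : ℕ) (hℓ : 2 ≤ ℓ) :
    (-1 : ℚ) ^ ℓ *
        ∑ n ∈ Finset.range (ℓ - 1),
          (-1 : ℚ) ^ n / ((n : ℚ) + 2) *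
            ((Nat.factorial (ℓ + 2 + n) : ℚ) /
              ((Nat.factorial n : ℚ) * (Nat.factorial (n + 2) : ℚ) *
                (Nat.factorial (ℓ - 2 - n) : ℚ))) =
      -1 + (-1 : ℚ) ^ ℓ + (ℓ : ℚ) * ((ℓ : ℚ) + 1) := by
  -- step 1: rewrite each summand as (-1)^(n+2) * ((n+2)-1) * C(ℓ,n+2) * C(ℓ+(n+2), ℓ)
  have hterm : ∀ n ∈ Finset.range (ℓ - 1),
      (-1 : ℚ) ^ n / ((n : ℚ) + 2) *
            ((Nat.factorial (ℓ + 2 + n) : ℚ) /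
              ((Nat.factorial n : ℚ) * (Nat.factorial (n + 2) : ℚ) *
                (Nat.factorial (ℓ - 2 - n) : ℚ)))
        = (-1:ℚ)^(n+2) * (((n+2 : ℕ) : ℚ) - 1) * (ℓ.choose (n+2) : ℚ)
            * ((ℓ + (n+2)).choose ℓ : ℚ) := by
    intro n hn
    rw [Finset.mem_range] at hn
    have hn2 : n + 2 ≤ ℓ := by omega
    have hc1 : (ℓ.choose (n+2) : ℚ) = (ℓ.factorial : ℚ) /
        (((n+2).factorial : ℚ) * ((ℓ - (n+2)).factorial : ℚ)) :=
      Nat.cast_choose ℚ hn2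
    have hc2 : ((ℓ + (n+2)).choose ℓ : ℚ) = ((ℓ + (n+2)).factorial : ℚ) /
        ((ℓ.factorial : ℚ) * ((ℓ + (n+2) - ℓ).factorial : ℚ)) :=
      Nat.cast_choose ℚ (Nat.le_add_right _ _)
    have he1 : ℓ - (n+2) = ℓ - 2 - n := by omega
    have he2 : ℓ + (n+2) - ℓ = n + 2 := by omega
    have he3 : ℓ + (n+2) = ℓ + 2 + n := by omega
    rw [hc1, hc2, he1, he2, he3]
    have hfn : (Nat.factorial n : ℚ) ≠ 0 := Nat.cast_ne_zero.mpr (Nat.factorial_ne_zero n)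
    have hfn2 : (Nat.factorial (n+2) : ℚ) ≠ 0 := Nat.cast_ne_zero.mpr (Nat.factorial_ne_zero _)
    have hfl : (Nat.factorial ℓ : ℚ) ≠ 0 := Nat.cast_ne_zero.mpr (Nat.factorial_ne_zero _)
    have hflmn : (Nat.factorial (ℓ - 2 - n) : ℚ) ≠ 0 := Nat.cast_ne_zero.mpr (Nat.factorial_ne_zero _)
    have hrec : (Nat.factorial (n+2) : ℚ) = ((n:ℚ)+2) * ((n:ℚ)+1) * (Nat.factorial n : ℚ) := by
      rw [Nat.factorial_succ, Nat.factorial_succ]; push_cast; ring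
    have hn0 : ((n:ℚ)+2) ≠ 0 := by positivity
    rw [hrec]
    push_cast
    field_simp
    ring
  rw [Finset.sum_congr rfl hterm]
  -- step 2: relate to the full sum over range (ℓ+1)
  set h : ℕ → ℚ := fun m => (-1:ℚ)^m * ((m : ℚ) - 1) * (ℓ.choose m : ℚ) * ((ℓ + m).choose ℓ : ℚ)
    with hh
  have hterm2 : ∀ n ∈ Finset.range (ℓ - 1),
      (-1:ℚ)^(n+2) * (((n+2 : ℕ) : ℚ) - 1) * (ℓ.choose (n+2) : ℚ) * ((ℓ + (n+2)).choose ℓ : ℚ)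
        = h (n+2) := by
    intro n _; rfl
  rw [Finset.sum_congr rfl hterm2]
  -- peel: ∑_{m<ℓ+1} h m = ∑_{n<ℓ-1} h (n+2) + h 1 + h 0
  have hl1 : ℓ - 1 + 1 = ℓ := by omega
  have hp1 : ∑ m ∈ range (ℓ+1), h m = (∑ m ∈ range ℓ, h (m+1)) + h 0 := Finset.sum_range_succ' _ _
  have hp2 : ∑ m ∈ range ℓ, h (m+1) = (∑ m ∈ range (ℓ-1), h (m+1+1)) + h (0+1) := by
    rw [← hl1]; exact Finset.sum_range_succ' _ _
  have h0 : h 0 = -1 := by simp [hh]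
  have h1 : h 1 = 0 := by simp [hh]
  have hsum_eq : ∑ n ∈ range (ℓ-1), h (n+2) = (∑ m ∈ range (ℓ+1), h m) + 1 := by
    have hstep : ∀ m : ℕ, h (m+1+1) = h (m+2) := by intro m; norm_num
    rw [hp1, hp2, h0, h1, Finset.sum_congr rfl (fun m _ => hstep m)]; ring
  -- step 3: evaluate ∑_{m<ℓ+1} h m
  have hB : ∑ m ∈ range (ℓ+1), (-1:ℚ)^m * (ℓ.choose m : ℚ) * ((ℓ + m).choose ℓ : ℚ)
      = (-1:ℚ)^ℓ := by
    have := key_alt_sum ℓ ℓ ℓ (le_refl ℓ)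
    simpa using this
  have hm : ∀ m : ℕ, ((m : ℚ)) * ((ℓ + m).choose ℓ : ℚ) = ((ℓ:ℚ)+1) * ((ℓ + m).choose (ℓ+1) : ℚ) := by
    intro m
    have := Nat.choose_succ_right_eq (ℓ + m) ℓ
    have he : ℓ + m - ℓ = m := by omega
    rw [he] at this
    have := congrArg (fun x : ℕ => (x : ℚ)) this
    push_cast at this
    linarith [this]
  have hA : ∑ m ∈ range (ℓ+1), (-1:ℚ)^m * (m : ℚ) * (ℓ.choose m : ℚ) * ((ℓ + m).choose ℓ : ℚ)
      = (-1:ℚ)^ℓ * (ℓ:ℚ) * ((ℓ:ℚ)+1) := by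
    have : ∀ m ∈ range (ℓ+1), (-1:ℚ)^m * (m : ℚ) * (ℓ.choose m : ℚ) * ((ℓ + m).choose ℓ : ℚ)
        = ((ℓ:ℚ)+1) * ((-1:ℚ)^m * (ℓ.choose m : ℚ) * ((ℓ + m).choose (ℓ+1) : ℚ)) := by
      intro m _
      have := hm m
      calc (-1:ℚ)^m * (m : ℚ) * (ℓ.choose m : ℚ) * ((ℓ + m).choose ℓ : ℚ)
          = (-1:ℚ)^m * (ℓ.choose m : ℚ) * ((m : ℚ) * ((ℓ + m).choose ℓ : ℚ)) := by ring
        _ = (-1:ℚ)^m * (ℓ.choose m : ℚ) * (((ℓ:ℚ)+1) * ((ℓ + m).choose (ℓ+1) : ℚ)) := by rw [this]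
        _ = ((ℓ:ℚ)+1) * ((-1:ℚ)^m * (ℓ.choose m : ℚ) * ((ℓ + m).choose (ℓ+1) : ℚ)) := by ring
    rw [Finset.sum_congr rfl this, ← Finset.mul_sum]
    rw [key_alt_sum ℓ ℓ (ℓ+1) (Nat.le_succ ℓ)]
    have : ℓ + 1 - ℓ = 1 := by omega
    rw [this, Nat.choose_one_right]
    ring
  have hfull : ∑ m ∈ range (ℓ+1), h m = (-1:ℚ)^ℓ * ((ℓ:ℚ) * ((ℓ:ℚ)+1) - 1) := by
    have hsplit : ∀ m ∈ range (ℓ+1), h m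
        = (-1:ℚ)^m * (m : ℚ) * (ℓ.choose m : ℚ) * ((ℓ + m).choose ℓ : ℚ)
          - (-1:ℚ)^m * (ℓ.choose m : ℚ) * ((ℓ + m).choose ℓ : ℚ) := by
      intro m _; simp [hh]; ring
    rw [Finset.sum_congr rfl hsplit, Finset.sum_sub_distrib, hA, hB]
    ring
  rw [hsum_eq, hfull]
  have hsq : (-1:ℚ)^ℓ * (-1:ℚ)^ℓ = 1 := by
    rw [← pow_add]
    exact Even.neg_one_pow ⟨ℓ, rfl⟩
  calc (-1:ℚ)^ℓ * ((-1:ℚ)^ℓ * ((ℓ:ℚ) * ((ℓ:ℚ)+1) - 1) + 1)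
      = ((-1:ℚ)^ℓ * (-1:ℚ)^ℓ) * ((ℓ:ℚ) * ((ℓ:ℚ)+1) - 1) + (-1:ℚ)^ℓ := by ring
    _ = -1 + (-1:ℚ)^ℓ + (ℓ:ℚ) * ((ℓ:ℚ)+1) := by rw [hsq]; ring
end

section
/- For every integer ℓ ≥ 2 one has (−1)^ℓ · Σ_{n=0}^{ℓ−2} [ (−1)^n / ( n! · (n+2)! ) ] · ( (ℓ+2+n)! / (ℓ−2−n)! ) = (1/2) · ( (ℓ+2)! / (ℓ−2)! ). (This is identity (14.9), proved by a generating-function argument.) -/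
open Finset

lemma key_diff (m : ℕ) : ∀ x p : ℕ, m ≤ p → m ≤ x →
    ∑ k ∈ Finset.range (m+1), (-1:ℚ)^k * (m.choose k) * ((x-k).choose p)
      = ((x-m).choose (p-m)) := by
  induction m with
  | zero => intro x p _ _; simp
  | succ m ih =>
    intro x p hmp hpx
    rw [Finset.sum_range_succ' _ (m+1)]
    have hps : ∀ j, ((m+1).choose (j+1) : ℚ) = m.choose j + m.choose (j+1) := by
      intro j; rw [Nat.choose_succ_succ]; push_cast; ring
    have step : ∀ j, (-1:ℚ)^(j+1) * ((m+1).choose (j+1)) * ((x-(j+1)).choose p)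
        = -((-1:ℚ)^j * (m.choose j) * (((x-1)-j).choose p))
          - ((-1:ℚ)^j * (m.choose (j+1)) * ((x-(j+1)).choose p)) := by
      intro j
      have : x - (j+1) = (x-1) - j := by omega
      rw [this, hps j]; ring
    rw [Finset.sum_congr rfl (fun j _ => step j)]
    rw [Finset.sum_sub_distrib]
    have hA : ∑ j ∈ Finset.range (m+1), -((-1:ℚ)^j * (m.choose j) * (((x-1)-j).choose p))
        = -(((x-1)-m).choose (p-m)) := by
      rw [Finset.sum_neg_distrib, ih (x-1) p (by omega) (by omega)]
    have hB : ∑ j ∈ Finset.range (m+1), (-1:ℚ)^j * (m.choose (j+1)) * ((x-(j+1)).choose p)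
        = (x.choose p : ℚ) - ((x-m).choose (p-m)) := by
      have hS := ih x p (by omega) (by omega)
      rw [Finset.sum_range_succ' _ m] at hS
      have e : ∀ j, (-1:ℚ)^(j+1) * (m.choose (j+1)) * ((x-(j+1)).choose p)
          = -((-1:ℚ)^j * (m.choose (j+1)) * ((x-(j+1)).choose p)) := by
        intro j; ring
      rw [Finset.sum_congr rfl (fun j _ => e j), Finset.sum_neg_distrib] at hS
      have hlast : ∑ j ∈ Finset.range (m+1), (-1:ℚ)^j * (m.choose (j+1)) * ((x-(j+1)).choose p)
          = ∑ j ∈ Finset.range m, (-1:ℚ)^j * (m.choose (j+1)) * ((x-(j+1)).choose p) := by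
        rw [Finset.sum_range_succ]
        simp [Nat.choose_succ_self]
      rw [hlast]
      simp only [pow_zero, Nat.choose_zero_right, Nat.cast_one, one_mul, Nat.sub_zero] at hS
      linarith
    rw [hA, hB]
    simp only [pow_zero, Nat.choose_zero_right, Nat.cast_one, one_mul, Nat.sub_zero]
    have hx1 : x - 1 - m = x - (m+1) := by omega
    have hp1 : p - m = (p - (m+1)) + 1 := by omega
    have hx : x - m = (x - (m+1)) + 1 := by omega
    rw [hx1, hp1, hx, Nat.choose_succ_succ]
    push_cast
    ring

/-- Identity (14.9), proved by a generating-function argument: for every integer `ℓ ≥ 2`,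
`(−1)^ℓ · Σ_{n=0}^{ℓ−2} (−1)^n/(n!·(n+2)!) · (ℓ+2+n)!/(ℓ−2−n)! = (1/2)·(ℓ+2)!/(ℓ−2)!`. -/
theorem generating_function_sum_identity (ℓ : ℕ) (hℓ : 2 ≤ ℓ) :
    (-1 : ℚ) ^ ℓ *
        ∑ n ∈ Finset.range (ℓ - 1),
          (-1 : ℚ) ^ n / ((Nat.factorial n : ℚ) * (Nat.factorial (n + 2) : ℚ)) *
            ((Nat.factorial (ℓ + 2 + n) : ℚ) / (Nat.factorial (ℓ - 2 - n) : ℚ)) =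
      1 / 2 * ((Nat.factorial (ℓ + 2) : ℚ) / (Nat.factorial (ℓ - 2) : ℚ)) := by
  obtain ⟨m, rfl⟩ := Nat.exists_eq_add_of_le hℓ
  have hr1 : 2 + m - 1 = m + 1 := by omega
  have hr2 : 2 + m - 2 = m := by omega
  rw [hr1, hr2]
  rw [← Finset.sum_range_reflect]
  have hterm : ∀ n ∈ Finset.range (m+1),
      (-1:ℚ)^(2+m) * ((-1 : ℚ) ^ (m - n) / ((Nat.factorial (m-n) : ℚ) * (Nat.factorial ((m-n) + 2) : ℚ)) *
        ((Nat.factorial (2 + m + 2 + (m-n)) : ℚ) / (Nat.factorial (m - (m-n)) : ℚ)))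
      = ((Nat.factorial (m+2) : ℚ) / (Nat.factorial m : ℚ)) *
        ((-1:ℚ)^n * ((m.choose n : ℚ)) * (((2*m+4-n).choose (m+2) : ℚ))) := by
    intro n hn
    have hnm : n ≤ m := by simpa [Nat.lt_succ_iff] using hn
    have e1 : 2 + m + 2 + (m - n) = 2*m+4-n := by omega
    have e2 : m - (m - n) = n := by omega
    have e3 : (m - n) + 2 = m + 2 - n := by omega
    rw [e1, e2, e3]
    have c1 : ((m.choose n : ℚ)) = (Nat.factorial m : ℚ) / ((Nat.factorial n : ℚ) * (Nat.factorial (m-n) : ℚ)) :=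
      Nat.cast_choose ℚ hnm
    have hle : m + 2 ≤ 2*m+4-n := by omega
    have c2 : (((2*m+4-n).choose (m+2) : ℚ))
        = (Nat.factorial (2*m+4-n) : ℚ) / ((Nat.factorial (m+2) : ℚ) * (Nat.factorial (m+2-n) : ℚ)) := by
      have e : 2*m+4-n-(m+2) = m+2-n := by omega
      rw [Nat.cast_choose ℚ hle, e]
    rw [c1, c2]
    have hs1 : ((-1:ℚ))^(m-n) = (-1)^m * (-1)^n := by
      rw [← pow_add, show m + n = (m-n) + 2*n from by omega, pow_add, pow_mul]
      norm_num
    have hs2 : ((-1:ℚ))^(2+m) = (-1)^m := by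
      rw [pow_add]; norm_num
    rw [hs1, hs2]
    have hm2 : ((-1:ℚ))^m * (-1)^m = 1 := by
      rw [← pow_add, ← two_mul, pow_mul]; norm_num
    have f0 : (Nat.factorial n : ℚ) ≠ 0 := Nat.cast_ne_zero.2 (Nat.factorial_ne_zero n)
    have f1 : (Nat.factorial (m-n) : ℚ) ≠ 0 := Nat.cast_ne_zero.2 (Nat.factorial_ne_zero _)
    have f2 : (Nat.factorial (m+2-n) : ℚ) ≠ 0 := Nat.cast_ne_zero.2 (Nat.factorial_ne_zero _)
    have f3 : (Nat.factorial m : ℚ) ≠ 0 := Nat.cast_ne_zero.2 (Nat.factorial_ne_zero _)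
    have f4 : (Nat.factorial (m+2) : ℚ) ≠ 0 := Nat.cast_ne_zero.2 (Nat.factorial_ne_zero _)
    have hm2' : ((-1:ℚ))^(m*2) = 1 := by rw [mul_comm, pow_mul]; norm_num
    field_simp
    linear_combination hm2
  simp only [Nat.add_sub_cancel]
  rw [Finset.mul_sum, Finset.sum_congr rfl hterm, ← Finset.mul_sum]
  have hkey := key_diff m (2*m+4) (m+2) (by omega) (by omega)
  rw [hkey]
  have e4 : 2*m+4-m = m+4 := by omega
  have e5 : m+2-m = 2 := by omega
  rw [e4, e5]
  have c3 : (((m+4).choose 2 : ℚ)) = (Nat.factorial (m+4) : ℚ) / ((Nat.factorial 2 : ℚ) * (Nat.factorial (m+2) : ℚ)) := by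
    have e : m+4-2 = m+2 := by omega
    rw [Nat.cast_choose ℚ (by omega), e]
  rw [c3]
  have e6 : 2 + m + 2 = m + 4 := by omega
  rw [e6]
  have f3 : (Nat.factorial m : ℚ) ≠ 0 := Nat.cast_ne_zero.2 (Nat.factorial_ne_zero _)
  have f4 : (Nat.factorial (m+2) : ℚ) ≠ 0 := Nat.cast_ne_zero.2 (Nat.factorial_ne_zero _)
  have : (Nat.factorial 2 : ℚ) = 2 := by norm_num [Nat.factorial]
  rw [this]
  field_simp
end

section
/- Let x₀ > 0, let q be a real number, and assume either q ∉ ℤ, or q ∈ ℤ and N ≤ q−1. Then for every integer N ≥ 1 satisfying the assumption and every x > 0: (−1)^N · I_N[t ↦ t^(−q)](x) = ( Γ(q−N)/Γ(q) ) · x^(N−q) − x₀^(N−q) · Σ_{i=0}^{N−1} ( Γ(q+i−N) / ( Γ(q) · i! ) ) · ( 1 − x/x₀ )^i. (This is Lemma B.6, eq. (B.9), with the convention a! = Γ(a+1): the explicit evaluation of the N-fold iterated primitive of t^(−q) based at x₀.) -/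
noncomputable section

/-- Iterated primitives based at `x₀`: `I₀[f] = f` and
`I_{k+1}[f](x) = ∫_{x₀}^{x} I_k[f](t) dt`. -/
def iterPrim (x₀ : ℝ) : ℕ → (ℝ → ℝ) → ℝ → ℝ
  | 0, f => f
  | k + 1, f => fun x => ∫ t in x₀..x, iterPrim x₀ k f t

private lemma q_ne_int (q : ℝ) (N : ℕ)
    (hq : (¬∃ m : ℤ, q = (m : ℝ)) ∨ ((∃ m : ℤ, q = (m : ℝ)) ∧ (N : ℝ) ≤ q - 1)) :
    ∀ m : ℤ, (m : ℝ) ≤ N → q ≠ (m : ℝ) := by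
  intro m hm he
  rcases hq with h | ⟨_, hle⟩
  · exact h ⟨m, he⟩
  · rw [he] at hle; linarith

private lemma gamma_q_ne (q : ℝ) (N : ℕ) (hN : 1 ≤ N)
    (hq : (¬∃ m : ℤ, q = (m : ℝ)) ∨ ((∃ m : ℤ, q = (m : ℝ)) ∧ (N : ℝ) ≤ q - 1)) :
    Real.Gamma q ≠ 0 := by
  apply Real.Gamma_ne_zero
  intro m
  have hle : ((-(m : ℤ) : ℤ) : ℝ) ≤ (N : ℝ) := by
    push_cast
    have h1 : (0:ℝ) ≤ (m:ℝ) := Nat.cast_nonneg m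
    have h2 : (0:ℝ) ≤ (N:ℝ) := Nat.cast_nonneg N
    linarith
  have h := q_ne_int q N hq (-(m : ℤ)) hle
  push_cast at h
  exact h

private lemma int_rpow_aux (a b r : ℝ) (ha : 0 < a) (hb : 0 < b) (hr : r ≠ -1) :
    ∫ t in a..b, t ^ r = (b ^ (r+1) - a ^ (r+1)) / (r+1) :=
  integral_rpow (Or.inr ⟨hr, Set.notMem_uIcc_of_lt ha hb⟩)

private lemma int_pow_affine (x₀ x : ℝ) (hx₀ : x₀ ≠ 0) (i : ℕ) :
    ∫ t in x₀..x, (1 - t / x₀) ^ i = -(x₀ * (1 - x / x₀) ^ (i + 1) / (i + 1)) := by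
  have h1 : ∀ t : ℝ, (1 - t / x₀) ^ i = (x₀ - t) ^ i / x₀ ^ i := by
    intro t; rw [← div_pow]; congr 1; field_simp
  simp only [h1]
  rw [intervalIntegral.integral_div, intervalIntegral.integral_comp_sub_left (fun s => s ^ i) x₀,
    integral_pow]
  have h2 : (1 - x / x₀) = (x₀ - x) / x₀ := by field_simp
  rw [h2, div_pow]
  have h3 : ((i : ℝ) + 1) ≠ 0 := by positivity
  field_simp
  ring

/-- Lemma B.6, eq. (B.9) (with the convention `a! = Γ(a+1)`): the explicit evaluation of
the `N`-fold iterated primitive of `t^(−q)` based at `x₀`, in the subcritical range. -/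
theorem iterated_primitive_rpow (x₀ : ℝ) (hx₀ : 0 < x₀) (q : ℝ) (N : ℕ) (hN : 1 ≤ N)
    (hq : (¬∃ m : ℤ, q = (m : ℝ)) ∨ ((∃ m : ℤ, q = (m : ℝ)) ∧ (N : ℝ) ≤ q - 1)) :
    ∀ x : ℝ, 0 < x →
      (-1 : ℝ) ^ N * iterPrim x₀ N (fun t => t ^ (-q)) x =
        Real.Gamma (q - N) / Real.Gamma q * x ^ ((N : ℝ) - q) -
          x₀ ^ ((N : ℝ) - q) *
            ∑ i ∈ Finset.range N,
              Real.Gamma (q + (i : ℝ) - N) / (Real.Gamma q * (Nat.factorial i : ℝ)) *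
                (1 - x / x₀) ^ i := by
  revert hq
  induction N, hN using Nat.le_induction with
  | base =>
    intro hq x hx
    have hne := q_ne_int q 1 hq
    have hq1 : q ≠ 1 := by simpa using hne 1 (by norm_num)
    have hΓq : Real.Gamma q ≠ 0 := gamma_q_ne q 1 le_rfl hq
    have hrec : Real.Gamma q = (q - 1) * Real.Gamma (q - 1) := by
      have h := Real.Gamma_add_one (sub_ne_zero.mpr hq1)
      rw [sub_add_cancel] at h
      exact h
    have hi : ∫ t in x₀..x, t ^ (-q) = (x ^ (1 - q) - x₀ ^ (1 - q)) / (1 - q) := by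
      rw [int_rpow_aux x₀ x (-q) hx₀ hx (by simpa [neg_eq_iff_eq_neg] using hq1),
        show -q + 1 = 1 - q by ring]
    have hΓ1 : Real.Gamma (q - 1) ≠ 0 := by
      intro h; rw [h, mul_zero] at hrec; exact hΓq hrec
    have hq1' : q - 1 ≠ 0 := sub_ne_zero.mpr hq1
    simp only [iterPrim, Finset.sum_range_one]
    push_cast
    rw [hi]
    have key : Real.Gamma (q - 1) / Real.Gamma q = 1 / (q - 1) := by
      rw [hrec, mul_comm, ← div_div, div_self hΓ1]
    simp only [Nat.factorial_zero, Nat.cast_one, pow_zero, mul_one]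
    rw [show q + 0 - 1 = q - 1 by ring, key]
    have h1q : (1:ℝ) - q ≠ 0 := fun h => hq1 (by linarith)
    have h : (1 - q) * (1 - q)⁻¹ = 1 := mul_inv_cancel₀ h1q
    have h' : (q - 1) * (q - 1)⁻¹ = 1 := mul_inv_cancel₀ hq1'
    linear_combination (x ^ (1 - q) - x₀ ^ (1 - q)) * ((1 - q)⁻¹ * h' + (q - 1)⁻¹ * h)
  | succ n hn ih =>
    intro hq x hx
    have hqn : (¬∃ m : ℤ, q = (m : ℝ)) ∨ ((∃ m : ℤ, q = (m : ℝ)) ∧ (n : ℝ) ≤ q - 1) := by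
      rcases hq with h | ⟨hm, hle⟩
      · exact Or.inl h
      · exact Or.inr ⟨hm, by push_cast at hle ⊢; linarith⟩
    have ih' := ih hqn
    have hne := q_ne_int q (n + 1) hq
    have hΓq : Real.Gamma q ≠ 0 := gamma_q_ne q (n+1) (by omega) hq
    have hqn1 : q ≠ (n : ℝ) + 1 := by
      have h := hne ((n : ℤ) + 1) (by push_cast; norm_num)
      push_cast at h; exact h
    have hu0 : (n : ℝ) + 1 - q ≠ 0 := sub_ne_zero.mpr (Ne.symm hqn1)
    have hrec : Real.Gamma (q - n) = (q - ((n : ℝ) + 1)) * Real.Gamma (q - ((n : ℝ) + 1)) := by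
      have h := Real.Gamma_add_one (s := q - ((n : ℝ) + 1))
        (sub_ne_zero.mpr hqn1)
      rw [show q - ((n : ℝ) + 1) + 1 = q - n by ring] at h
      exact h
    have hpos : ∀ t ∈ Set.uIcc x₀ x, (0 : ℝ) < t := by
      intro t ht
      rcases Set.mem_uIcc.mp ht with ⟨h1, _⟩ | ⟨h1, _⟩ <;> linarith
    set g : ℝ → ℝ := fun t =>
      (-1 : ℝ) ^ n * (Real.Gamma (q - n) / Real.Gamma q * t ^ ((n : ℝ) - q) -
        x₀ ^ ((n : ℝ) - q) * ∑ i ∈ Finset.range n,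
          Real.Gamma (q + (i : ℝ) - n) / (Real.Gamma q * (Nat.factorial i : ℝ)) *
            (1 - t / x₀) ^ i) with hg
    have h2 : ((-1 : ℝ) ^ n) * ((-1 : ℝ) ^ n) = 1 := by
      rw [← pow_add, Even.neg_one_pow ⟨n, rfl⟩]
    have hIN : Set.EqOn (fun t => iterPrim x₀ n (fun t => t ^ (-q)) t) g (Set.uIcc x₀ x) := by
      intro t ht
      have h := ih' t (hpos t ht)
      simp only [hg]
      linear_combination ((-1 : ℝ) ^ n) * h - iterPrim x₀ n (fun t => t ^ (-q)) t * h2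
    have hint1 : IntervalIntegrable (fun t : ℝ => t ^ ((n : ℝ) - q)) MeasureTheory.volume x₀ x := by
      apply ContinuousOn.intervalIntegrable
      apply ContinuousOn.rpow_const continuousOn_id
      exact fun t ht => Or.inl (ne_of_gt (hpos t ht))
    have hcont2 : Continuous fun t : ℝ => x₀ ^ ((n : ℝ) - q) * ∑ i ∈ Finset.range n,
        Real.Gamma (q + (i : ℝ) - n) / (Real.Gamma q * (Nat.factorial i : ℝ)) *
          (1 - t / x₀) ^ i := by fun_prop
    have hconti : ∀ i : ℕ, Continuous fun t : ℝ =>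
        Real.Gamma (q + (i : ℝ) - n) / (Real.Gamma q * (Nat.factorial i : ℝ)) *
          (1 - t / x₀) ^ i := by intro i; fun_prop
    have hr1 : (n : ℝ) - q ≠ -1 := fun h => hqn1 (by linarith)
    have hIrpow : ∫ t in x₀..x, t ^ ((n : ℝ) - q) =
        (x ^ ((n : ℝ) + 1 - q) - x₀ ^ ((n : ℝ) + 1 - q)) / ((n : ℝ) + 1 - q) := by
      rw [int_rpow_aux x₀ x _ hx₀ hx hr1, show (n : ℝ) - q + 1 = (n : ℝ) + 1 - q by ring]
    have hcalc : iterPrim x₀ (n + 1) (fun t => t ^ (-q)) x =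
        (-1 : ℝ) ^ n * (Real.Gamma (q - n) / Real.Gamma q *
            ((x ^ ((n : ℝ) + 1 - q) - x₀ ^ ((n : ℝ) + 1 - q)) / ((n : ℝ) + 1 - q)) -
          x₀ ^ ((n : ℝ) - q) * ∑ i ∈ Finset.range n,
            Real.Gamma (q + (i : ℝ) - n) / (Real.Gamma q * (Nat.factorial i : ℝ)) *
              (-(x₀ * (1 - x / x₀) ^ (i + 1) / (i + 1)))) := by
      show (∫ t in x₀..x, iterPrim x₀ n (fun t => t ^ (-q)) t) = _
      rw [intervalIntegral.integral_congr hIN]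
      simp only [hg]
      rw [intervalIntegral.integral_const_mul]
      rw [intervalIntegral.integral_sub (hint1.const_mul _) (hcont2.intervalIntegrable x₀ x)]
      rw [intervalIntegral.integral_const_mul, intervalIntegral.integral_const_mul,
        intervalIntegral.integral_finset_sum (fun i _ => (hconti i).intervalIntegrable x₀ x)]
      simp only [intervalIntegral.integral_const_mul, int_pow_affine x₀ x hx₀.ne', hIrpow]
    rw [hcalc]
    have hterm : ∀ i ∈ Finset.range n,
        Real.Gamma (q + (i : ℝ) - n) / (Real.Gamma q * (Nat.factorial i : ℝ)) *
          (-(x₀ * (1 - x / x₀) ^ (i + 1) / (i + 1))) =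
        -x₀ * (Real.Gamma (q + ((i : ℝ) + 1) - ((n : ℝ) + 1)) /
          (Real.Gamma q * (Nat.factorial (i + 1) : ℝ)) * (1 - x / x₀) ^ (i + 1)) := by
      intro i _
      rw [show q + ((i : ℝ) + 1) - ((n : ℝ) + 1) = q + (i : ℝ) - n by ring]
      have hfact : (Nat.factorial (i + 1) : ℝ) = ((i : ℝ) + 1) * (Nat.factorial i : ℝ) := by
        push_cast [Nat.factorial_succ]; ring
      rw [hfact]
      have h1 : (Nat.factorial i : ℝ) ≠ 0 := Nat.cast_ne_zero.mpr (Nat.factorial_ne_zero i)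
      have h3 : ((i : ℝ) + 1) ≠ 0 := by positivity
      field_simp
    rw [Finset.sum_congr rfl hterm, ← Finset.mul_sum]
    push_cast
    rw [Finset.sum_range_succ']
    push_cast
    simp only [pow_zero, mul_one, Nat.factorial_zero, Nat.cast_one]
    rw [show q + 0 - ((n:ℝ) + 1) = q - ((n:ℝ) + 1) by ring]
    have hsign : (-1 : ℝ) ^ (n + 1) * (-1 : ℝ) ^ n = -1 := by
      rw [← pow_add, show n + 1 + n = 2 * n + 1 by ring, pow_succ,
        Even.neg_one_pow (even_two_mul n), one_mul]
    rw [← mul_assoc, hsign, hrec]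
    rw [show (n : ℝ) + 1 - q = ((n : ℝ) - q) + 1 by ring,
      Real.rpow_add_one hx₀.ne', Real.rpow_add_one hx.ne']
    have hu0' : (n : ℝ) - q + 1 ≠ 0 := by
      intro h; exact hu0 (by linarith)
    field_simp
    ring
end
end
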